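/- arXiv:1401.0841 — 2 statements merged into one kernel-verified Lean document; each statement's English description precedes it below -/
import Mathlib

section
/- For the Firework and Reverse Firework processes built from the same cumulative distribution (α_k), the probability that the information reaches the individual at site n is equal in both processes, namely both equal to u_n, the renewal sequence of the renewal process with inter-arrival distribution q_k = (1-α_{k-1})∏_{i=0}^{k-2}α_i. -/
open MeasureTheory ProbabilityTheory Filter Finset
open scoped ENNReal

/-- The final number of spreaders of the Firework process:
`M = min{ i ≥ 0 : R_j ≤ i - j for all j = 0,...,i }`, with value `⊤` if no such `i` exists. -/
noncomputable def fireworkM {Ω : Type*} (R : ℕ → Ω → ℕ) (ω : Ω) : ℕ∞ :=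
  sInf {N : ℕ∞ | ∃ i : ℕ, N = (i : ℕ∞) ∧ ∀ j ≤ i, R j ω ≤ i - j}

namespace Rumor18

/-! ### The reverse firework process as a function of the radii -/

def zetaF (r : ℕ → ℕ) : ℕ → Bool
  | 0 => true
  | (n+1) => decide (∃ m : Fin (n+1), zetaF r m = true ∧ n+1 - (m : ℕ) ≤ r (n+1))

lemma zetaF_zero (r : ℕ → ℕ) : zetaF r 0 = true := by simp [zetaF]

lemma zetaF_succ_iff (r : ℕ → ℕ) (n : ℕ) :
    zetaF r (n+1) = true ↔ ∃ m < n+1, zetaF r m = true ∧ n+1 - m ≤ r (n+1) := by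
  simp only [zetaF, decide_eq_true_eq]
  constructor
  · rintro ⟨m, h1, h2⟩; exact ⟨m, m.isLt, h1, h2⟩
  · rintro ⟨m, hm, h1, h2⟩; exact ⟨⟨m, hm⟩, h1, h2⟩

lemma zetaF_pos_iff (r : ℕ → ℕ) {n : ℕ} (hn : 0 < n) :
    zetaF r n = true ↔ ∃ m < n, zetaF r m = true ∧ n - m ≤ r n := by
  obtain ⟨k, rfl⟩ := Nat.exists_eq_succ_of_ne_zero hn.ne'
  exact zetaF_succ_iff r k

lemma zetaF_congr {r r' : ℕ → ℕ} : ∀ n, (∀ i, 1 ≤ i → i ≤ n → r i = r' i) →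
    zetaF r n = zetaF r' n := by
  intro n
  induction n using Nat.strong_induction_on with
  | _ n ih =>
    intro h
    match n with
    | 0 => rw [zetaF_zero, zetaF_zero]
    | (m+1) =>
      have hj : ∀ j, j < m + 1 → zetaF r j = zetaF r' j := fun j hj =>
        ih j hj (fun i h1 h2 => h i h1 (h2.trans hj.le))
      rw [Bool.eq_iff_iff, zetaF_succ_iff, zetaF_succ_iff]
      constructor <;> rintro ⟨k, hk, h1, h2⟩
      · exact ⟨k, hk, (hj k hk) ▸ h1, (h (m+1) (Nat.succ_le_succ m.zero_le) le_rfl) ▸ h2⟩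
      · exact ⟨k, hk, (hj k hk) ▸ h1, (h (m+1) (Nat.succ_le_succ m.zero_le) le_rfl).symm ▸ h2⟩

lemma zetaF_blocked {r : ℕ → ℕ} {k : ℕ} (hb : ∀ j, 1 ≤ j → j < k → r j < j) :
    ∀ j, 1 ≤ j → j < k → zetaF r j = false := by
  intro j
  induction j using Nat.strong_induction_on with
  | _ j ih =>
    intro h1 h2
    by_contra hne
    have ht : zetaF r j = true := by simpa using hne
    rw [zetaF_pos_iff r h1] at ht
    obtain ⟨m, hm, hzm, hrm⟩ := ht
    rcases Nat.eq_zero_or_pos m with rfl | hmpos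
    · simp only [Nat.sub_zero] at hrm; exact absurd (hb j h1 h2) (by omega)
    · have := ih m hm hmpos (hm.trans h2)
      rw [this] at hzm; exact absurd hzm (by simp)

lemma zetaF_shift {r : ℕ → ℕ} {k : ℕ} (hk1 : 1 ≤ k)
    (hb : ∀ j, 1 ≤ j → j < k → r j < j) (hrk : k ≤ r k) :
    ∀ d, zetaF r (k + d) = zetaF (fun m => r (k + m)) d := by
  intro d
  induction d using Nat.strong_induction_on with
  | _ d ih =>
    match d with
    | 0 =>
      rw [Nat.add_zero, zetaF_zero, zetaF_pos_iff r hk1]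
      exact ⟨0, hk1, zetaF_zero r, by simpa using hrk⟩
    | (e+1) =>
      rw [Bool.eq_iff_iff,
        show k + (e+1) = (k + e) + 1 by omega, zetaF_succ_iff, zetaF_succ_iff]
      rw [show (k + e) + 1 = k + (e + 1) by omega]
      constructor
      · rintro ⟨m, hm, hzm, hrm⟩
        rcases Nat.lt_or_ge m k with hmk | hmk
        · rcases Nat.eq_zero_or_pos m with rfl | hmpos
          · exact ⟨0, by omega, zetaF_zero _, by omega⟩
          · rw [zetaF_blocked hb m hmpos hmk] at hzm; exact absurd hzm (by simp)
        · refine ⟨m - k, by omega, ?_, by omega⟩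
          have h3 : zetaF r (k + (m - k)) = zetaF (fun m' => r (k + m')) (m - k) :=
            ih (m - k) (by omega)
          rw [← h3, show k + (m - k) = m by omega]; exact hzm
      · rintro ⟨m', hm', hzm, hrm⟩
        refine ⟨k + m', by omega, ?_, by omega⟩
        rw [ih m' hm']; exact hzm

lemma zetaF_iff_noCut (r : ℕ → ℕ) : ∀ n, (zetaF r n = true ↔
    ∀ i, 1 ≤ i → i ≤ n → ∃ j, i ≤ j ∧ j ≤ n ∧ j - i + 1 ≤ r j) := by
  intro n
  induction n using Nat.strong_induction_on with
  | _ n ih =>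
    match n with
    | 0 => simp [zetaF_zero]; omega
    | (N+1) =>
      constructor
      · intro hz i hi1 hiN
        rw [zetaF_succ_iff] at hz
        obtain ⟨m, hm, hzm, hrm⟩ := hz
        rcases Nat.lt_or_ge m i with hmi | hmi
        · exact ⟨N+1, hiN, le_rfl, by omega⟩
        · obtain ⟨j, hj1, hj2, hj3⟩ := (ih m hm).mp hzm i hi1 hmi
          exact ⟨j, hj1, by omega, hj3⟩
      · intro hnc
        classical
        set ms := Nat.findGreatest (fun m => zetaF r m = true) N with hms
        have hmsQ : zetaF r ms = true :=
          Nat.findGreatest_spec (P := fun m => zetaF r m = true) (Nat.zero_le N) (zetaF_zero r)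
        have hmsle : ms ≤ N := Nat.findGreatest_le N
        have hgr : ∀ m, ms < m → m ≤ N → ¬ (zetaF r m = true) := by
          intro m h1 h2; exact Nat.findGreatest_is_greatest h1 h2
        obtain ⟨j, hj1, hj2, hj3⟩ := hnc (ms + 1) (by omega) (by omega)
        have hzj : zetaF r j = true := by
          rw [zetaF_pos_iff r (show 0 < j by omega)]
          exact ⟨ms, by omega, hmsQ, by omega⟩
        rcases Nat.lt_or_ge j (N+1) with hjN | hjN
        · exact absurd hzj (hgr j (by omega) (by omega))
        · have hje : j = N+1 := le_antisymm hj2 hjN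
          rwa [hje] at hzj

/-! ### Patterns and cylinder probabilities -/

def patt {Ω : Type*} (X : ℕ → Ω → ℕ) (a k : ℕ) : Ω → (Fin k → ℕ) :=
  fun ω j => X (a + (j : ℕ)) ω

def extF {k : ℕ} (y : Fin k → ℕ) : ℕ → ℕ := fun i => if h : i < k then y ⟨i, h⟩ else 0

lemma extF_lt {k : ℕ} (y : Fin k → ℕ) {i : ℕ} (h : i < k) : extF y i = y ⟨i, h⟩ := dif_pos h

variable {Ω : Type*} [MeasurableSpace Ω] {P : Measure Ω} [IsProbabilityMeasure P]
  {X : ℕ → Ω → ℕ} {μ : Measure ℕ}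

lemma patt_meas (hm : ∀ i, Measurable (X i)) (a k : ℕ) : Measurable (patt X a k) :=
  measurable_pi_lambda _ (fun _ => hm _)

omit [IsProbabilityMeasure P] in
lemma single_prob (hm : ∀ i, Measurable (X i)) (hid : ∀ i, Measure.map (X i) P = μ)
    (i : ℕ) (S : Set ℕ) : P (X i ⁻¹' S) = μ S := by
  rw [← hid i, Measure.map_apply (hm i) (MeasurableSet.of_discrete)]

omit [IsProbabilityMeasure P] in
lemma box_prob (hm : ∀ i, Measurable (X i))
    (hindep : iIndepFun X P)
    (hid : ∀ i, Measure.map (X i) P = μ) (a k : ℕ) (S : Fin k → Set ℕ) :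
    P (⋂ j : Fin k, X (a + (j:ℕ)) ⁻¹' S j) = ∏ j : Fin k, μ (S j) := by
  classical
  set sets : ℕ → Set ℕ := fun i => if h : i - a < k ∧ a ≤ i then S ⟨i - a, h.1⟩ else Set.univ
    with hsets
  have hS : ∀ i ∈ (Finset.range k).image (a + ·), MeasurableSet (sets i) :=
    fun i _ => MeasurableSet.of_discrete
  have h1 := hindep.measure_inter_preimage_eq_mul ((Finset.range k).image (a + ·)) hS
  have hinj : Set.InjOn (a + ·) (Finset.range k) := fun x _ y _ h => Nat.add_left_cancel h
  have hset_eq : ∀ j : Fin k, sets (a + (j:ℕ)) = S j := by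
    intro j
    have hj := j.isLt
    simp only [hsets]
    rw [dif_pos (⟨by omega, by omega⟩ : a + (j:ℕ) - a < k ∧ a ≤ a + (j:ℕ))]
    exact congrArg S (by ext; simp)
  have heq : (⋂ i ∈ (Finset.range k).image (a + ·), X i ⁻¹' sets i)
      = ⋂ j : Fin k, X (a + (j:ℕ)) ⁻¹' S j := by
    ext ω
    simp only [Set.mem_iInter, Finset.mem_image, Finset.mem_range]
    constructor
    · intro h j
      have := h (a + (j:ℕ)) ⟨j, j.isLt, rfl⟩
      rwa [hset_eq j] at this
    · rintro h i ⟨j, hj, rfl⟩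
      have h2 := h ⟨j, hj⟩
      have e := hset_eq ⟨j, hj⟩
      simp only [Fin.val_mk] at e
      rw [e]; exact h2
  rw [heq] at h1
  rw [h1, Finset.prod_image (fun x hx y hy h => hinj hx hy h)]
  rw [← Fin.prod_univ_eq_prod_range (fun j => P (X (a + j) ⁻¹' sets (a + j))) k]
  apply Finset.prod_congr rfl
  intro j _
  rw [hset_eq j, single_prob hm hid]

omit [IsProbabilityMeasure P] in
/-- Key cylinder formula. -/
lemma cyl_prob (hm : ∀ i, Measurable (X i))
    (hindep : iIndepFun X P)
    (hid : ∀ i, Measure.map (X i) P = μ) (a k : ℕ) (T : Set (Fin k → ℕ)) :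
    P (patt X a k ⁻¹' T) = ∑' y : T, ∏ j : Fin k, μ {(y : Fin k → ℕ) j} := by
  have hUnion : patt X a k ⁻¹' T
      = ⋃ y : T, ⋂ j : Fin k, X (a + (j:ℕ)) ⁻¹' {(y : Fin k → ℕ) j} := by
    ext ω
    simp only [Set.mem_preimage, Set.mem_iUnion, Set.mem_iInter, Set.mem_preimage,
      Set.mem_singleton_iff]
    constructor
    · intro h; exact ⟨⟨patt X a k ω, h⟩, fun j => rfl⟩
    · rintro ⟨y, hy⟩
      have : patt X a k ω = (y : Fin k → ℕ) := funext hy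
      rw [this]; exact y.2
  rw [hUnion, measure_iUnion]
  · exact tsum_congr (fun y => box_prob hm hindep hid a k _)
  · rintro ⟨y, hy⟩ ⟨z, hz⟩ hne
    simp only [Function.onFun]
    rw [Set.disjoint_left]
    intro ω hωy hωz
    apply hne
    simp only [Set.mem_iInter, Set.mem_preimage, Set.mem_singleton_iff] at hωy hωz
    ext1; exact funext (fun j => (hωy j).symm.trans (hωz j))
  · exact fun y => MeasurableSet.iInter (fun j => (hm _) MeasurableSet.of_discrete)

def appE (k l : ℕ) : ((Fin k → ℕ) × (Fin l → ℕ)) ≃ (Fin (k+l) → ℕ) where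
  toFun pq := fun i => Sum.elim pq.1 pq.2 (finSumFinEquiv.symm i)
  invFun y := (fun j => y (Fin.castAdd l j), fun j => y (Fin.natAdd k j))
  left_inv := by rintro ⟨p, q⟩; ext j <;> simp
  right_inv := by
    intro y; funext i
    obtain ⟨s, rfl⟩ := finSumFinEquiv.surjective i
    cases s <;> simp

lemma appE_castAdd (k l : ℕ) (p : Fin k → ℕ) (q : Fin l → ℕ) (j : Fin k) :
    appE k l (p, q) (Fin.castAdd l j) = p j := by simp [appE]

lemma appE_natAdd (k l : ℕ) (p : Fin k → ℕ) (q : Fin l → ℕ) (j : Fin l) :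
    appE k l (p, q) (Fin.natAdd k j) = q j := by simp [appE]

lemma appE_prod (μ : Measure ℕ) (k l : ℕ) (p : Fin k → ℕ) (q : Fin l → ℕ) :
    ∏ i : Fin (k+l), μ {appE k l (p, q) i} =
      (∏ j : Fin k, μ {p j}) * ∏ j : Fin l, μ {q j} := by
  rw [← Equiv.prod_comp finSumFinEquiv (fun i => μ {appE k l (p, q) i})]
  rw [Fintype.prod_sum_type]
  congr 1
  · exact Finset.prod_congr rfl (fun j _ => by
      rw [show finSumFinEquiv (Sum.inl j) = Fin.castAdd l j from rfl, appE_castAdd])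
  · exact Finset.prod_congr rfl (fun j _ => by
      rw [show finSumFinEquiv (Sum.inr j) = Fin.natAdd k j from rfl, appE_natAdd])

omit [IsProbabilityMeasure P] in
lemma split_prob (hm : ∀ i, Measurable (X i))
    (hindep : iIndepFun X P)
    (hid : ∀ i, Measure.map (X i) P = μ) (a k l : ℕ)
    (T : Set (Fin k → ℕ)) (S : Set (Fin l → ℕ)) :
    P (patt X a k ⁻¹' T ∩ patt X (a+k) l ⁻¹' S) =
      P (patt X a k ⁻¹' T) * P (patt X (a+k) l ⁻¹' S) := by
  classical
  set U : Set (Fin (k+l) → ℕ) :=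
    {y | (fun j => y (Fin.castAdd l j)) ∈ T ∧ (fun j => y (Fin.natAdd k j)) ∈ S} with hU
  have hpc : ∀ ω : Ω, (fun j : Fin k => patt X a (k+l) ω (Fin.castAdd l j)) = patt X a k ω := by
    intro ω; funext j; show X (a + (Fin.castAdd l j : ℕ)) ω = X (a + j) ω
    congr 1
  have hpn : ∀ ω : Ω, (fun j : Fin l => patt X a (k+l) ω (Fin.natAdd k j))
      = patt X (a+k) l ω := by
    intro ω; funext j; show X (a + (Fin.natAdd k j : ℕ)) ω = X (a + k + j) ω
    congr 1; simp [Fin.natAdd]; omega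
  have hev : patt X a k ⁻¹' T ∩ patt X (a+k) l ⁻¹' S = patt X a (k+l) ⁻¹' U := by
    ext ω
    simp only [Set.mem_inter_iff, Set.mem_preimage, hU, Set.mem_setOf_eq]
    rw [show (fun j => patt X a (k+l) ω (Fin.castAdd l j)) = patt X a k ω from hpc ω,
      show (fun j => patt X a (k+l) ω (Fin.natAdd k j)) = patt X (a+k) l ω from hpn ω]
  rw [hev, cyl_prob hm hindep hid, cyl_prob hm hindep hid, cyl_prob hm hindep hid]
  rw [_root_.tsum_subtype U (fun y => ∏ j : Fin (k+l), μ {y j}),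
    _root_.tsum_subtype T (fun y => ∏ j : Fin k, μ {y j}),
    _root_.tsum_subtype S (fun y => ∏ j : Fin l, μ {y j})]
  rw [← Equiv.tsum_eq (appE k l), ENNReal.tsum_prod']
  have key : ∀ p q, U.indicator (fun y => ∏ j : Fin (k+l), μ {y j}) (appE k l (p, q)) =
      (T.indicator (fun y => ∏ j : Fin k, μ {y j}) p) *
      (S.indicator (fun y => ∏ j : Fin l, μ {y j}) q) := by
    intro p q
    have hmem : appE k l (p, q) ∈ U ↔ p ∈ T ∧ q ∈ S := by
      simp only [hU, Set.mem_setOf_eq]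
      rw [show (fun j => appE k l (p,q) (Fin.castAdd l j)) = p from funext (appE_castAdd k l p q),
        show (fun j => appE k l (p,q) (Fin.natAdd k j)) = q from funext (appE_natAdd k l p q)]
    simp only [Set.indicator_apply]
    by_cases hp : p ∈ T <;> by_cases hq : q ∈ S
    · rw [if_pos hp, if_pos hq, if_pos (hmem.mpr ⟨hp, hq⟩), appE_prod]
    · rw [if_pos hp, if_neg hq, if_neg (fun h => hq (hmem.mp h).2), mul_zero]
    · rw [if_neg hp, if_neg (fun h => hp (hmem.mp h).1), zero_mul]
    · rw [if_neg hp, if_neg (fun h => hp (hmem.mp h).1), zero_mul]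
  simp_rw [key]
  rw [← ENNReal.tsum_mul_right]
  exact tsum_congr (fun p => ENNReal.tsum_mul_left)

/-! ### The concrete events -/

def Tz (m : ℕ) : Set (Fin m → ℕ) :=
  {y | zetaF (fun m' => if m' = 0 then 0 else extF y (m'-1)) m = true}

def TF (n : ℕ) : Set (Fin (n+1) → ℕ) := {y | ∀ i ≤ n, ∃ j, j ≤ i ∧ i - j + 1 ≤ extF y j}

def SAn (k : ℕ) : ℕ → Set ℕ := fun j =>
  if j = 0 then Set.univ else if j = k then Set.Ici k else Set.Iio j

omit [MeasurableSpace Ω] in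
lemma patt_event (a k : ℕ) (Φ : (ℕ → ℕ) → Prop)
    (hw : ∀ r r' : ℕ → ℕ, (∀ i, i < k → r i = r' i) → (Φ r → Φ r')) :
    patt X a k ⁻¹' {y | Φ (extF y)} = {ω | Φ (fun i => X (a + i) ω)} := by
  ext ω
  simp only [Set.mem_preimage, Set.mem_setOf_eq]
  constructor
  · intro h
    refine hw _ _ (fun i hi => ?_) h
    simp only [extF, patt, dif_pos hi]
  · intro h
    refine hw _ _ (fun i hi => ?_) h
    simp only [extF, patt, dif_pos hi]

omit [MeasurableSpace Ω] in
lemma zeta_event (c m : ℕ) :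
    patt X (c+1) m ⁻¹' Tz m = {ω | zetaF (fun i => X (c + i) ω) m = true} := by
  have h1 : patt X (c+1) m ⁻¹' Tz m
      = {ω | zetaF (fun m' => if m' = 0 then 0 else X (c + 1 + (m'-1)) ω) m = true} := by
    refine patt_event (c+1) m
      (fun r => zetaF (fun m' => if m' = 0 then 0 else r (m'-1)) m = true) ?_
    intro r r' hrr h
    rw [← h]
    refine (zetaF_congr m (fun i h1 h2 => ?_)).symm
    rcases Nat.eq_zero_or_pos i with rfl | hi
    · rfl
    · simp only [if_neg hi.ne', hrr (i-1) (by omega)]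
  rw [h1]
  ext ω
  simp only [Set.mem_setOf_eq]
  rw [zetaF_congr m (r' := fun i => X (c + i) ω) (fun i h1 h2 => by
    simp only [if_neg (by omega : ¬ i = 0)]; congr 1; omega)]

omit [MeasurableSpace Ω] in
lemma pattA_event {k : ℕ} (hk : 1 ≤ k) :
    patt X 0 (k+1) ⁻¹' (Set.univ.pi (fun j : Fin (k+1) => SAn k (j : ℕ)))
      = {ω | (∀ j, 1 ≤ j → j < k → X j ω < j) ∧ k ≤ X k ω} := by
  ext ω
  simp only [Set.mem_preimage, Set.mem_univ_pi, Set.mem_setOf_eq, patt]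
  constructor
  · intro h
    constructor
    · intro j h1 h2
      have := h ⟨j, by omega⟩
      simp only [SAn, Fin.val_mk, if_neg (by omega : ¬ j = 0), if_neg (by omega : ¬ j = k),
        Set.mem_Iio, zero_add] at this
      exact this
    · have := h ⟨k, by omega⟩
      simp only [SAn, Fin.val_mk, if_neg (by omega : ¬ k = 0), if_pos rfl,
        Set.mem_Ici, zero_add] at this
      exact this
  · rintro ⟨h1, h2⟩ j
    rcases Nat.eq_zero_or_pos (j : ℕ) with hj0 | hjpos
    · simp [SAn, hj0]
    rcases eq_or_ne (j : ℕ) k with hjk | hjk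
    · simpa [SAn, hjk, Nat.one_le_iff_ne_zero.mp hk] using h2
    · simp only [SAn, if_neg (by omega : ¬ (j:ℕ) = 0), if_neg hjk, Set.mem_Iio, zero_add]
      exact h1 j hjpos (by have := j.isLt; omega)

omit [MeasurableSpace Ω] in
lemma patt_pi (a k : ℕ) (S : Fin k → Set ℕ) :
    patt X a k ⁻¹' Set.univ.pi S = ⋂ j : Fin k, X (a + (j:ℕ)) ⁻¹' S j := by
  ext ω; simp [patt, Set.mem_univ_pi]

lemma prod_SA {α : ℕ → ℝ≥0∞} (hμle : ∀ c, μ {x | x ≤ c} = α c)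
    [IsProbabilityMeasure μ] {k : ℕ} (hk : 1 ≤ k) :
    ∏ j : Fin (k+1), μ (SAn k (j : ℕ)) = (1 - α (k-1)) * ∏ i ∈ range (k-1), α i := by
  have hIio : ∀ j, 1 ≤ j → μ (Set.Iio j) = α (j - 1) := by
    intro j hj
    rw [← hμle]
    congr 1
    ext x; simp [Set.mem_Iio]; omega
  have hIci : μ (Set.Ici k) = 1 - α (k-1) := by
    have : Set.Ici k = (Set.Iio k)ᶜ := by ext x; simp
    rw [this, measure_compl (MeasurableSet.of_discrete) (measure_ne_top μ _), measure_univ,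
      hIio k hk]
  rw [Fin.prod_univ_eq_prod_range (fun j => μ (SAn k j)) (k+1), Finset.prod_range_succ]
  have hk' : k = (k-1) + 1 := by omega
  rw [show SAn k k = Set.Ici k by simp [SAn, Nat.one_le_iff_ne_zero.mp hk], hIci]
  have hfirst : ∏ j ∈ range k, μ (SAn k j) = ∏ i ∈ range (k-1), α i := by
    rw [hk', Finset.prod_range_succ']
    have h0 : μ (SAn ((k-1)+1) 0) = 1 := by simp [SAn]
    rw [h0, mul_one]
    refine Finset.prod_congr rfl (fun i hi => ?_)
    rw [mem_range] at hi
    rw [show SAn ((k-1)+1) (i+1) = Set.Iio (i+1) from by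
      unfold SAn
      rw [if_neg (by omega : ¬ i + 1 = 0), if_neg (by omega : ¬ i + 1 = (k-1) + 1)]]
    rw [hIio (i+1) (by omega)]
    simp
  rw [hfirst, mul_comm]

/-! ### reversal -/

lemma extF_rev {n : ℕ} (y : Fin (n+1) → ℕ) {m : ℕ} (hm : m ≤ n) :
    extF (y ∘ Fin.revPerm) m = extF y (n - m) := by
  rw [extF_lt _ (by omega : m < n+1), extF_lt _ (by omega : n - m < n+1)]
  show y (Fin.revPerm _) = _
  rw [Fin.revPerm_apply]
  congr 1
  ext
  simp [Fin.rev]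

lemma rev_mem (n : ℕ) (y : Fin (n+1) → ℕ) :
    y ∈ TF n ↔ (y ∘ Fin.revPerm) ∈ Tz (n+1) := by
  simp only [TF, Tz, Set.mem_setOf_eq]
  rw [zetaF_iff_noCut]
  constructor
  · intro h i hi1 hin
    obtain ⟨j0, hj0, hle⟩ := h (n+1-i) (by omega)
    refine ⟨n+1-j0, by omega, by omega, ?_⟩
    rw [if_neg (by omega : ¬ n+1-j0 = 0)]
    rw [show n+1-j0-1 = n - j0 by omega, extF_rev y (by omega : n - j0 ≤ n)]
    rw [show n - (n - j0) = j0 by omega]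
    omega
  · intro h i hin
    obtain ⟨j', hij', hj'n, hle⟩ := h (n+1-i) (by omega) (by omega)
    rw [if_neg (by omega : ¬ j' = 0), show j'-1 = n - (n+1-j') by omega,
      extF_rev y (by omega : n - (n+1-j') ≤ n),
      show n - (n - (n+1-j')) = n+1-j' by omega] at hle
    exact ⟨n+1-j', by omega, by omega⟩

lemma tsum_rev (μ : Measure ℕ) (n : ℕ) :
    ∑' y : TF n, ∏ j : Fin (n+1), μ {(y : Fin (n+1) → ℕ) j} =
    ∑' y : Tz (n+1), ∏ j : Fin (n+1), μ {(y : Fin (n+1) → ℕ) j} := by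
  have hcomp : ∀ z : Fin (n+1) → ℕ, (z ∘ Fin.revPerm) ∘ Fin.revPerm = z := by
    intro z; funext i; simp [Fin.rev_rev]
  let e : ↥(TF n) ≃ ↥(Tz (n+1)) :=
    { toFun := fun y => ⟨y.1 ∘ Fin.revPerm, (rev_mem n y.1).mp y.2⟩
      invFun := fun z => ⟨z.1 ∘ Fin.revPerm, by
        have := (rev_mem n (z.1 ∘ Fin.revPerm)).symm.mp
        rw [hcomp z.1] at this
        exact this z.2⟩
      left_inv := fun y => Subtype.ext (hcomp y.1)
      right_inv := fun z => Subtype.ext (hcomp z.1) }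
  rw [← Equiv.tsum_eq e (fun z : ↥(Tz (n+1)) => ∏ j : Fin (n+1), μ {(z : Fin (n+1) → ℕ) j})]
  refine tsum_congr (fun y => ?_)
  exact (Equiv.prod_comp Fin.revPerm (fun j => μ {(y : Fin (n+1) → ℕ) j})).symm

/-! ### the renewal decomposition -/

lemma vrec [IsProbabilityMeasure μ]
    (hm : ∀ i, Measurable (X i))
    (hindep : iIndepFun X P)
    (hid : ∀ i, Measure.map (X i) P = μ)
    {α : ℕ → ℝ≥0∞} (hμle : ∀ c, μ {x | x ≤ c} = α c)
    (N : ℕ) (hN : 1 ≤ N) :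
    P {ω | zetaF (fun i => X i ω) N = true} =
      ∑ k ∈ Icc 1 N, ((1 - α (k-1)) * ∏ i ∈ range (k-1), α i) *
        P {ω | zetaF (fun i => X i ω) (N-k) = true} := by
  classical
  set A : ℕ → Set Ω := fun k => {ω | (∀ j, 1 ≤ j → j < k → X j ω < j) ∧ k ≤ X k ω} with hA
  set B : ℕ → Set Ω := fun k => {ω | zetaF (fun m => X (k + m) ω) (N - k) = true} with hB
  -- decomposition of the event
  have hdec : {ω | zetaF (fun i => X i ω) N = true} = ⋃ k ∈ (Icc 1 N : Finset ℕ), (A k ∩ B k) := by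
    ext ω
    set r : ℕ → ℕ := fun i => X i ω with hr
    simp only [Set.mem_setOf_eq, Set.mem_iUnion, Set.mem_inter_iff, mem_Icc, exists_prop, hA, hB]
    constructor
    · intro hz
      have hex : ∃ j, 1 ≤ j ∧ zetaF r j = true := ⟨N, hN, hz⟩
      set k := Nat.find hex with hkdef
      obtain ⟨hk1, hkz⟩ := Nat.find_spec hex
      have hkN : k ≤ N := Nat.find_min' hex ⟨hN, hz⟩
      have hmin : ∀ j, j < k → ¬(1 ≤ j ∧ zetaF r j = true) := fun j hj => Nat.find_min hex hj
      have hblock : ∀ j, 1 ≤ j → j < k → r j < j := by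
        intro j h1 h2
        by_contra hcon
        push_neg at hcon
        exact hmin j h2 ⟨h1, (zetaF_pos_iff r h1).mpr ⟨0, h1, zetaF_zero r, by omega⟩⟩
      have hrk : k ≤ r k := by
        obtain ⟨m, hmk, hzm, hle⟩ := (zetaF_pos_iff r hk1).mp hkz
        rcases Nat.eq_zero_or_pos m with rfl | hmpos
        · simpa only [Nat.sub_zero] using hle
        · exact absurd ⟨hmpos, hzm⟩ (hmin m hmk)
      refine ⟨k, ⟨hk1, hkN⟩, ⟨hblock, hrk⟩, ?_⟩
      have := zetaF_shift hk1 hblock hrk (N - k)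
      rw [show k + (N - k) = N by omega] at this
      rw [← this]; exact hz
    · rintro ⟨k, ⟨hk1, hkN⟩, ⟨hblock, hrk⟩, hzb⟩
      have := zetaF_shift hk1 hblock hrk (N - k)
      rw [show k + (N - k) = N by omega] at this
      rw [this]; exact hzb
  -- patt forms
  have hAp : ∀ k, 1 ≤ k → A k
      = patt X 0 (k+1) ⁻¹' (Set.univ.pi (fun j : Fin (k+1) => SAn k (j : ℕ))) :=
    fun k hk => (pattA_event hk).symm
  have hBp : ∀ k, B k = patt X (0 + (k+1)) (N-k) ⁻¹' Tz (N-k) := by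
    intro k
    simp only [zero_add]
    rw [zeta_event k (N-k)]
  -- measurability and disjointness
  have hmeasAB : ∀ k ∈ (Icc 1 N : Finset ℕ), MeasurableSet (A k ∩ B k) := by
    intro k hk
    rw [mem_Icc] at hk
    rw [hAp k hk.1, hBp k]
    exact ((patt_meas hm _ _) MeasurableSet.of_discrete).inter
      ((patt_meas hm _ _) MeasurableSet.of_discrete)
  have hdisj : Set.PairwiseDisjoint ((Icc 1 N : Finset ℕ) : Set ℕ) (fun k => A k ∩ B k) := by
    intro k hk k' hk' hne
    simp only [Finset.coe_Icc, Set.mem_Icc] at hk hk'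
    rw [Function.onFun, Set.disjoint_left]
    rintro ω ⟨⟨hbl, hgeq⟩, -⟩ ⟨⟨hbl', hgeq'⟩, -⟩
    rcases lt_or_gt_of_ne hne with hlt | hlt
    · exact absurd (hbl' k hk.1 hlt) (by omega)
    · exact absurd (hbl k' hk'.1 hlt) (by omega)
  rw [hdec, measure_biUnion_finset hdisj hmeasAB]
  refine Finset.sum_congr rfl (fun k hk => ?_)
  rw [mem_Icc] at hk
  rw [hAp k hk.1, hBp k]
  have hsplit := split_prob hm hindep hid 0 (k+1) (N-k)
    (Set.univ.pi (fun j : Fin (k+1) => SAn k (j : ℕ))) (Tz (N-k))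
  rw [hsplit]
  congr 1
  · rw [patt_pi, box_prob hm hindep hid 0 (k+1) _, prod_SA hμle hk.1]
  · rw [cyl_prob hm hindep hid, ← cyl_prob hm hindep hid (0+1) (N-k) (Tz (N-k)),
      zeta_event 0 (N-k)]
    congr 1
    ext ω
    simp only [Set.mem_setOf_eq, zero_add]

/-! ### the event that the firework process reaches past `n` -/

lemma M_event (R : ℕ → Ω → ℕ) (n : ℕ) :
    {ω | (n : ℕ∞) < fireworkM R ω} = patt R 0 (n+1) ⁻¹' TF n := by
  have h1 : {ω | (n:ℕ∞) < fireworkM R ω}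
      = {ω | ∀ i ≤ n, ∃ j, j ≤ i ∧ i - j + 1 ≤ R j ω} := by
    ext ω
    simp only [Set.mem_setOf_eq]
    constructor
    · intro h i hi
      by_contra hno
      push_neg at hno
      have hmem : (i : ℕ∞) ∈ {N : ℕ∞ | ∃ i' : ℕ, N = (i' : ℕ∞) ∧ ∀ j ≤ i', R j ω ≤ i' - j} :=
        ⟨i, rfl, fun j hj => by have := hno j hj; omega⟩
      have hle : fireworkM R ω ≤ (i : ℕ∞) := sInf_le hmem
      have h2 : (n : ℕ∞) < (i : ℕ∞) := lt_of_lt_of_le h hle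
      have : n < i := by exact_mod_cast h2
      omega
    · intro h
      have hge : ((n+1 : ℕ) : ℕ∞) ≤ fireworkM R ω := by
        apply le_sInf
        rintro b ⟨i, rfl, hi⟩
        have hni : ¬ i ≤ n := fun hin => by
          obtain ⟨j, hj, hle⟩ := h i hin
          have := hi j hj
          omega
        exact_mod_cast (by omega : n + 1 ≤ i)
      calc (n:ℕ∞) < ((n+1:ℕ):ℕ∞) := by exact_mod_cast n.lt_succ_self
        _ ≤ _ := hge
  have h2 : patt R 0 (n+1) ⁻¹' TF n
      = {ω | ∀ i ≤ n, ∃ j, j ≤ i ∧ i - j + 1 ≤ R (0 + j) ω} := by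
    refine patt_event 0 (n+1) (fun r => ∀ i ≤ n, ∃ j, j ≤ i ∧ i - j + 1 ≤ r j) ?_
    intro r r' hrr h i hi
    obtain ⟨j, hj, hle⟩ := h i hi
    exact ⟨j, hj, by rwa [← hrr j (by omega)]⟩
  rw [h1, h2]
  simp only [zero_add]


end Rumor18

open Rumor18

/-- for the Firework process (radii `R`) and the Reverse Firework process
(radii `R'`) built from the same cumulative distribution `(α_k)`, the probability that the
information reaches site `n` is the same in both processes, and equals the renewal sequence
`u` of the renewal process with inter-arrival distribution `q_k = (1-α_{k-1})∏_{i=0}^{k-2}α_i`: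
`P(M > n) = P(ζ_{n+1} = 1) = u_{n+1}` for all `n ≥ 0`. -/
theorem rumor_stmt_18 {Ω : Type*} [MeasurableSpace Ω] (P : Measure Ω) [IsProbabilityMeasure P]
    (R R' : ℕ → Ω → ℕ) (hmeas : ∀ i, Measurable (R i)) (hmeas' : ∀ i, Measurable (R' i))
    (hindep : iIndepFun R P)
    (hindep' : iIndepFun R' P)
    (hident : ∀ i, Measure.map (R i) P = Measure.map (R 0) P)
    (hident' : ∀ i, Measure.map (R' i) P = Measure.map (R 0) P)
    (α : ℕ → ℝ≥0∞) (hα : ∀ k, P {ω | R 0 ω ≤ k} = α k)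
    (hle1 : ∀ k, α k ≤ 1) (hα0 : 0 < α 0 ∧ α 0 < 1)
    (ζ : ℕ → Ω → Bool)
    (hζ0 : ∀ ω, ζ 0 ω = true)
    (hζ : ∀ n : ℕ, 0 < n → ∀ ω,
      (ζ n ω = true ↔ ∃ m < n, ζ m ω = true ∧ n - m ≤ R' n ω))
    (u : ℕ → ℝ≥0∞) (hu0 : u 0 = 1)
    (hurec : ∀ n : ℕ, u (n + 1) =
      ∑ k ∈ Finset.Icc 1 (n + 1),
        ((1 - α (k - 1)) * ∏ i ∈ Finset.range (k - 1), α i) * u (n + 1 - k)) :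
    ∀ n : ℕ, P {ω | (n : ℕ∞) < fireworkM R ω} = u (n + 1) ∧
      P {ω | ζ (n + 1) ω = true} = u (n + 1) := by
  classical
  set μ : Measure ℕ := Measure.map (R 0) P with hμ
  haveI : IsProbabilityMeasure μ := Measure.isProbabilityMeasure_map (hmeas 0).aemeasurable
  have hμle : ∀ c, μ {x | x ≤ c} = α c := by
    intro c
    rw [hμ, Measure.map_apply (hmeas 0) MeasurableSet.of_discrete]
    exact hα c
  -- ζ agrees with zetaF
  have hζeq : ∀ n ω, ζ n ω = zetaF (fun i => R' i ω) n := by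
    intro n
    induction n using Nat.strong_induction_on with
    | _ n ih =>
      intro ω
      rcases Nat.eq_zero_or_pos n with rfl | hn
      · rw [hζ0 ω, zetaF_zero]
      · rw [Bool.eq_iff_iff, hζ n hn ω, zetaF_pos_iff _ hn]
        constructor <;> rintro ⟨m, hm, h1, h2⟩
        · exact ⟨m, hm, (ih m hm ω) ▸ h1, h2⟩
        · exact ⟨m, hm, (ih m hm ω) ▸ h1, h2⟩
  have hsets : ∀ m, {ω | ζ m ω = true} = {ω | zetaF (fun i => R' i ω) m = true} := by
    intro m; ext ω; simp only [Set.mem_setOf_eq, hζeq m ω]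
  -- ζ probabilities equal u
  have hv : ∀ m, P {ω | ζ m ω = true} = u m := by
    intro m
    induction m using Nat.strong_induction_on with
    | _ m ih =>
      rcases m with _ | n
      · have h0 : {ω | ζ 0 ω = true} = Set.univ := Set.eq_univ_of_forall (fun ω => hζ0 ω)
        rw [h0, measure_univ, hu0]
      · rw [hsets (n+1), vrec hmeas' hindep' hident' hμle (n+1) (Nat.succ_le_succ n.zero_le),
          hurec n]
        refine Finset.sum_congr rfl (fun k hk => ?_)
        rw [mem_Icc] at hk
        congr 1
        rw [← hsets (n+1-k), ih (n+1-k) (by omega)]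
  -- firework probabilities
  have hM : ∀ n : ℕ, P {ω | (n : ℕ∞) < fireworkM R ω} = P {ω | ζ (n+1) ω = true} := by
    intro n
    rw [M_event R n, cyl_prob hmeas hindep hident 0 (n+1) (TF n), tsum_rev μ n,
      ← cyl_prob hmeas' hindep' hident' (0+1) (n+1) (Tz (n+1)), zeta_event 0 (n+1),
      hsets (n+1)]
    congr 1
    ext ω
    simp only [Set.mem_setOf_eq, zero_add]
  exact fun n => ⟨(hM n).trans (hv (n+1)), hv (n+1)⟩
end

section
/- If ∏_{k≥0} α_k = 0 and μ = 1 + ∑_{j≥1} ∏_{i=0}^{j-1} α_i = ∞, then in the Reverse Firework process the rumor survives almost surely (infinitely many individuals are informed) but the asymptotic proportion of informed individuals is zero: N(n)/n → 0 almost surely. -/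
open MeasureTheory ProbabilityTheory Filter Finset
open scoped ENNReal

set_option maxHeartbeats 1000000

namespace RF

variable {Ω : Type*}

/-- first success time after base `b`: least `k ≥ 1` with `R (b+k) ≥ k`. -/
noncomputable def nxt (R : ℕ → Ω → ℕ) (b : ℕ) (ω : Ω) : ℕ :=
  sInf {k | 1 ≤ k ∧ k ≤ R (b + k) ω}

/-- renewal positions started at `b`. -/
noncomputable def pos (R : ℕ → Ω → ℕ) (b : ℕ) : ℕ → Ω → ℕ
  | 0 => fun _ => b
  | (j+1) => fun ω => pos R b j ω + nxt R (pos R b j ω) ω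

/-- gaps -/
noncomputable def gap (R : ℕ → Ω → ℕ) (b : ℕ) (j : ℕ) (ω : Ω) : ℕ :=
  nxt R (pos R b j ω) ω

def good (R : ℕ → Ω → ℕ) : Set Ω := {ω | ∀ b, ∃ k, 1 ≤ k ∧ k ≤ R (b + k) ω}

variable {R : ℕ → Ω → ℕ} {ω : Ω} {b j t : ℕ}

lemma nxt_spec (h : ω ∈ good R) (b : ℕ) :
    1 ≤ nxt R b ω ∧ nxt R b ω ≤ R (b + nxt R b ω) ω := Nat.sInf_mem (h b)

lemma nxt_min {k : ℕ} (hk : k < nxt R b ω) : ¬(1 ≤ k ∧ k ≤ R (b + k) ω) :=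
  Nat.notMem_of_lt_sInf hk

lemma le_pos (b j : ℕ) (ω : Ω) : b ≤ pos R b j ω := by
  induction j with
  | zero => simp [pos]
  | succ j ih => exact le_trans ih (Nat.le_add_right _ _)

lemma pos_lt_succ (h : ω ∈ good R) : pos R b j ω < pos R b (j+1) ω := by
  have := (nxt_spec h (pos R b j ω)).1
  simp only [pos]; omega

lemma pos_strictMono (h : ω ∈ good R) : StrictMono (fun j => pos R b j ω) :=
  strictMono_nat_of_lt_succ (fun _ => pos_lt_succ h)

lemma self_le_pos (h : ω ∈ good R) (b j : ℕ) : j ≤ pos R b j ω := by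
  induction j with
  | zero => exact Nat.zero_le _
  | succ j ih => exact lt_of_le_of_lt ih (pos_lt_succ h)

lemma pos_shift (b : ℕ) (j : ℕ) (ω : Ω) :
    pos R b (j+1) ω = pos R (b + nxt R b ω) j ω := by
  induction j with
  | zero => simp [pos]
  | succ j ih =>
      rw [show pos R b (j+1+1) ω = pos R b (j+1) ω + nxt R (pos R b (j+1) ω) ω from rfl, ih]
      rfl

lemma gap_shift (b : ℕ) (j : ℕ) (ω : Ω) :
    gap R b (j+1) ω = gap R (b + nxt R b ω) j ω := by
  simp only [gap, pos_shift]

lemma gap_zero (b : ℕ) (ω : Ω) : gap R b 0 ω = nxt R b ω := rfl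

lemma pos_eq_sum (b j : ℕ) (ω : Ω) :
    pos R b j ω = b + ∑ i ∈ Finset.range j, gap R b i ω := by
  induction j with
  | zero => simp [pos]
  | succ j ih =>
      rw [Finset.sum_range_succ, show pos R b (j+1) ω = pos R b j ω + nxt R (pos R b j ω) ω from rfl,
        gap, ih]
      omega

lemma nxt_eq_iff (ht : 1 ≤ t) :
    nxt R b ω = t ↔ ((∀ k, 1 ≤ k → k < t → R (b + k) ω < k) ∧ t ≤ R (b + t) ω) := by
  constructor
  · intro hn
    have hne : {k | 1 ≤ k ∧ k ≤ R (b + k) ω}.Nonempty := by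
      by_contra hcon
      rw [Set.not_nonempty_iff_eq_empty] at hcon
      simp [nxt, hcon] at hn; omega
    have hmem := Nat.sInf_mem hne
    rw [show sInf {k | 1 ≤ k ∧ k ≤ R (b + k) ω} = nxt R b ω from rfl, hn] at hmem
    refine ⟨fun k h1 h2 => ?_, hmem.2⟩
    have := nxt_min (R := R) (b := b) (ω := ω) (k := k) (by omega)
    push_neg at this
    exact lt_of_lt_of_le (Nat.lt_succ_of_le le_rfl) (by have := this h1; omega)
  · rintro ⟨hlt, hT⟩
    have hmem : t ∈ {k | 1 ≤ k ∧ k ≤ R (b + k) ω} := ⟨ht, hT⟩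
    refine le_antisymm (Nat.sInf_le hmem) ?_
    by_contra hcon
    push_neg at hcon
    have h2 := Nat.sInf_mem ⟨t, hmem⟩
    set s := sInf {k | 1 ≤ k ∧ k ≤ R (b + k) ω}
    exact absurd h2.2 (by have := hlt s h2.1 hcon; omega)

lemma nxt_eq_zero_iff : nxt R b ω = 0 ↔ ∀ k, 1 ≤ k → R (b + k) ω < k := by
  rw [nxt, Nat.sInf_eq_zero]
  constructor
  · rintro (h | h)
    · exact absurd h.1 (by omega)
    · intro k hk
      by_contra hc
      exact absurd h (Set.nonempty_iff_ne_empty.1 ⟨k, hk, by omega⟩)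
  · intro h
    right
    rw [Set.eq_empty_iff_forall_notMem]
    rintro k ⟨h1, h2⟩
    exact absurd h2 (by have := h k h1; omega)


section zeta

variable {ζ : ℕ → Ω → Bool}

lemma informed_pos (hζ0 : ∀ ω, ζ 0 ω = true)
    (hζ : ∀ n : ℕ, 0 < n → ∀ ω, (ζ n ω = true ↔ ∃ m < n, ζ m ω = true ∧ n - m ≤ R n ω))
    (h : ω ∈ good R) : ∀ j, ζ (pos R 0 j ω) ω = true := by
  intro j
  induction j with
  | zero => exact hζ0 ω
  | succ j ih =>
      have hg := nxt_spec h (pos R 0 j ω)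
      have hpos : 0 < pos R 0 (j+1) ω := by
        have : pos R 0 j ω < pos R 0 (j+1) ω := pos_lt_succ h
        omega
      rw [hζ _ hpos ω]
      refine ⟨pos R 0 j ω, pos_lt_succ h, ih, ?_⟩
      have : pos R 0 (j+1) ω = pos R 0 j ω + nxt R (pos R 0 j ω) ω := rfl
      rw [this]
      simpa using hg.2

lemma informed_eq_pos (hζ0 : ∀ ω, ζ 0 ω = true)
    (hζ : ∀ n : ℕ, 0 < n → ∀ ω, (ζ n ω = true ↔ ∃ m < n, ζ m ω = true ∧ n - m ≤ R n ω))
    (h : ω ∈ good R) : ∀ n, ζ n ω = true → ∃ j, pos R 0 j ω = n := by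
  intro n
  induction n using Nat.strong_induction_on with
  | _ n IH =>
    intro hn
    rcases Nat.eq_zero_or_pos n with h0 | h0
    · exact ⟨0, by simp [pos, h0]⟩
    obtain ⟨m, hmlt, hζm, hRm⟩ := (hζ n h0 ω).1 hn
    obtain ⟨i, hi⟩ := IH m hmlt hζm
    -- j := least index with n ≤ pos (j+1)
    have hne : {j | n ≤ pos R 0 (j+1) ω}.Nonempty :=
      ⟨n, by simp only [Set.mem_setOf_eq]; have := self_le_pos h 0 (n+1); omega⟩
    set j := sInf {j | n ≤ pos R 0 (j+1) ω} with hj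
    have h1 : n ≤ pos R 0 (j+1) ω := Nat.sInf_mem hne
    have h2 : pos R 0 j ω < n := by
      rcases Nat.eq_zero_or_pos j with hj0 | hj0
      · rw [hj0]; simpa [pos] using h0
      · have : j - 1 ∉ {j | n ≤ pos R 0 (j+1) ω} := Nat.notMem_of_lt_sInf (by omega)
        simp only [Set.mem_setOf_eq, not_le] at this
        rwa [show j - 1 + 1 = j by omega] at this
    have hij : i ≤ j := by
      by_contra hc
      push_neg at hc
      have : pos R 0 (j+1) ω ≤ pos R 0 i ω := (pos_strictMono h).le_iff_le.2 (by omega)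
      omega
    have hmj : m ≤ pos R 0 j ω := by
      rw [← hi]; exact (pos_strictMono h).le_iff_le.2 hij
    -- k := n - pos j is in the set for base pos j
    have hk : nxt R (pos R 0 j ω) ω ≤ n - pos R 0 j ω := by
      apply Nat.sInf_le
      simp only [Set.mem_setOf_eq]
      constructor
      · omega
      · have : pos R 0 j ω + (n - pos R 0 j ω) = n := by omega
        rw [this]; omega
    have hle : pos R 0 (j+1) ω ≤ n := by
      have : pos R 0 (j+1) ω = pos R 0 j ω + nxt R (pos R 0 j ω) ω := rfl
      omega
    exact ⟨j+1, le_antisymm hle h1⟩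

lemma informed_infinite (hζ0 : ∀ ω, ζ 0 ω = true)
    (hζ : ∀ n : ℕ, 0 < n → ∀ ω, (ζ n ω = true ↔ ∃ m < n, ζ m ω = true ∧ n - m ≤ R n ω))
    (h : ω ∈ good R) : {n : ℕ | ζ n ω = true}.Infinite :=
  Set.infinite_of_injective_forall_mem
    (f := fun j => pos R 0 j ω) ((pos_strictMono h).injective)
    (fun j => informed_pos hζ0 hζ h j)

end zeta

section meas

variable [MeasurableSpace Ω]

/-- σ-algebra generated by coordinates in `S`. -/
def MS (R : ℕ → Ω → ℕ) (S : Set ℕ) : MeasurableSpace Ω :=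
  ⨆ m ∈ S, MeasurableSpace.comap (R m) inferInstance

variable {R : ℕ → Ω → ℕ}

lemma MS_le (hmeas : ∀ i, Measurable (R i)) (S : Set ℕ) :
    MS R S ≤ ‹MeasurableSpace Ω› :=
  iSup₂_le fun m _ => (hmeas m).comap_le

lemma measurableSet_coord {S : Set ℕ} {m : ℕ} (hm : m ∈ S) (A : Set ℕ) :
    MeasurableSet[MS R S] ((R m) ⁻¹' A) := by
  have h1 : MeasurableSet[MeasurableSpace.comap (R m) inferInstance] ((R m) ⁻¹' A) :=
    ⟨A, trivial, rfl⟩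
  exact le_biSup (fun m => MeasurableSpace.comap (R m) inferInstance) hm _ h1

lemma nxt_eq_set (b t : ℕ) (ht : 1 ≤ t) :
    {ω | nxt R b ω = t}
      = ⋂ k ∈ Finset.Icc 1 t, (R (b+k)) ⁻¹' (if k = t then Set.Ici t else Set.Iio k) := by
  ext ω
  simp only [Set.mem_setOf_eq, Set.mem_iInter, Finset.mem_Icc, Set.mem_preimage]
  rw [nxt_eq_iff ht]
  constructor
  · rintro ⟨hlt, hT⟩ k ⟨hk1, hk2⟩
    by_cases hkt : k = t
    · subst hkt; simpa using hT
    · simp only [hkt, if_false, Set.mem_Iio]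
      exact hlt k hk1 (by omega)
  · intro hk
    constructor
    · intro k h1 h2
      have := hk k ⟨h1, by omega⟩
      simpa [show k ≠ t by omega] using this
    · simpa using hk t ⟨ht, le_rfl⟩

lemma nxt_eq_zero_set (b : ℕ) :
    {ω | nxt R b ω = 0} = ⋂ (k : ℕ), ⋂ (_ : 1 ≤ k), (R (b+k)) ⁻¹' (Set.Iio k) := by
  ext ω
  simp only [Set.mem_setOf_eq, Set.mem_iInter, Set.mem_preimage, Set.mem_Iio]
  exact nxt_eq_zero_iff

lemma nxt_mem_of_ne_zero (h : nxt R b ω ≠ 0) :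
    1 ≤ nxt R b ω ∧ nxt R b ω ≤ R (b + nxt R b ω) ω := by
  have hne : {k | 1 ≤ k ∧ k ≤ R (b + k) ω}.Nonempty := by
    by_contra hc
    rw [Set.not_nonempty_iff_eq_empty] at hc
    exact h (by simp [nxt, hc])
  exact Nat.sInf_mem hne

lemma block_subset (b K : ℕ) :
    (⋂ k ∈ Finset.Icc 1 K, (R (b+k)) ⁻¹' (Set.Iio k))
      ⊆ {ω | nxt R b ω = 0} ∪ {ω | K < nxt R b ω} := by
  intro ω hω
  simp only [Set.mem_iInter, Finset.mem_Icc, Set.mem_preimage, Set.mem_Iio] at hω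
  by_cases h0 : nxt R b ω = 0
  · exact Or.inl h0
  · right
    obtain ⟨h1, h2⟩ := nxt_mem_of_ne_zero h0
    by_contra hc
    simp only [Set.mem_setOf_eq, not_lt] at hc
    exact absurd h2 (by have := hω (nxt R b ω) ⟨h1, hc⟩; omega)

lemma ms_nxt_eq {b' b : ℕ} (hb : b' ≤ b) (t : ℕ) :
    MeasurableSet[MS R (Set.Ioi b')] {ω | nxt R b ω = t} := by
  rcases Nat.eq_zero_or_pos t with h0 | h0
  · rw [h0, nxt_eq_zero_set]
    refine MeasurableSet.iInter fun k => MeasurableSet.iInter fun hk => ?_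
    exact measurableSet_coord (Set.mem_Ioi.2 (by omega)) _
  · rw [nxt_eq_set b t h0]
    refine MeasurableSet.biInter (Finset.Icc 1 t).countable_toSet fun k hk => ?_
    have hk0 : k ∈ Finset.Icc 1 t := hk
    have hk' : 1 ≤ k ∧ k ≤ t := Finset.mem_Icc.1 hk0
    exact measurableSet_coord (Set.mem_Ioi.2 (by omega)) _

lemma ms_nxt_eq_Ioc {b t : ℕ} (ht : 1 ≤ t) :
    MeasurableSet[MS R (Set.Ioc b (b+t))] {ω | nxt R b ω = t} := by
  rw [nxt_eq_set b t ht]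
  refine MeasurableSet.biInter (Finset.Icc 1 t).countable_toSet fun k hk => ?_
  have hk0 : k ∈ Finset.Icc 1 t := hk
  have hk' : 1 ≤ k ∧ k ≤ t := Finset.mem_Icc.1 hk0
  exact measurableSet_coord (Set.mem_Ioc.2 (by omega)) _

lemma pos_eq_empty {b j σ : ℕ} (hσ : σ < b) : {ω | pos R b j ω = σ} = ∅ := by
  ext ω
  simp only [Set.mem_setOf_eq, Set.mem_empty_iff_false, iff_false]
  have := le_pos (R := R) b j ω
  omega

lemma ms_pos_eq {b' b : ℕ} (hb : b' ≤ b) (j σ : ℕ) :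
    MeasurableSet[MS R (Set.Ioi b')] {ω | pos R b j ω = σ} := by
  induction j generalizing σ with
  | zero =>
      by_cases h : b = σ
      · have : {ω : Ω | pos R b 0 ω = σ} = Set.univ := by ext ω; simp [pos, h]
        rw [this]; exact @MeasurableSet.univ Ω (MS R (Set.Ioi b'))
      · have : {ω : Ω | pos R b 0 ω = σ} = ∅ := by ext ω; simp [pos, h]
        rw [this]; exact @MeasurableSet.empty Ω (MS R (Set.Ioi b'))
  | succ j ih =>
      have hset : {ω | pos R b (j+1) ω = σ}
          = ⋃ σ' ∈ Finset.range (σ+1), ({ω | pos R b j ω = σ'} ∩ {ω | nxt R σ' ω = σ - σ'}) := by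
        ext ω
        simp only [Set.mem_setOf_eq, Set.mem_iUnion, Finset.mem_range, Set.mem_inter_iff,
          Set.mem_setOf_eq]
        constructor
        · intro hp
          refine ⟨pos R b j ω, ?_, rfl, ?_⟩
          · have : pos R b j ω ≤ pos R b (j+1) ω := Nat.le_add_right _ _
            omega
          · have : pos R b (j+1) ω = pos R b j ω + nxt R (pos R b j ω) ω := rfl
            omega
        · rintro ⟨σ', hσ', h1, h2⟩
          have : pos R b (j+1) ω = pos R b j ω + nxt R (pos R b j ω) ω := rfl
          rw [this, h1, h2]
          omega
      rw [hset]
      refine MeasurableSet.biUnion (Finset.range (σ+1)).countable_toSet fun σ' _ => ?_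
      by_cases hσ' : b ≤ σ'
      · exact (ih σ').inter (ms_nxt_eq (le_trans hb hσ') _)
      · rw [pos_eq_empty (by omega)]
        simp only [Set.empty_inter]
        exact @MeasurableSet.empty Ω (MS R (Set.Ioi b'))

lemma ms_nxt_mem {b' b : ℕ} (hb : b' ≤ b) (A : Set ℕ) :
    MeasurableSet[MS R (Set.Ioi b')] {ω | nxt R b ω ∈ A} := by
  have : {ω | nxt R b ω ∈ A} = ⋃ t ∈ A, {ω | nxt R b ω = t} := by
    ext ω; simp
  rw [this]
  exact MeasurableSet.biUnion A.to_countable fun t _ => ms_nxt_eq hb t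

lemma ms_gap_mem {b' b : ℕ} (hb : b' ≤ b) (j : ℕ) (A : Set ℕ) :
    MeasurableSet[MS R (Set.Ioi b')] {ω | gap R b j ω ∈ A} := by
  have hset : {ω | gap R b j ω ∈ A}
      = ⋃ (σ' : ℕ), ({ω | pos R b j ω = σ'} ∩ {ω | nxt R σ' ω ∈ A}) := by
    ext ω
    simp only [Set.mem_setOf_eq, Set.mem_iUnion, Set.mem_inter_iff, Set.mem_setOf_eq, gap]
    constructor
    · intro h
      exact ⟨pos R b j ω, rfl, h⟩
    · rintro ⟨σ', h1, h2⟩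
      rw [h1]; exact h2
  rw [hset]
  refine MeasurableSet.iUnion fun σ' => ?_
  by_cases hσ' : b ≤ σ'
  · exact (ms_pos_eq hb j σ').inter (ms_nxt_mem (le_trans hb hσ') A)
  · rw [pos_eq_empty (by omega)]
    simp only [Set.empty_inter]
    exact @MeasurableSet.empty Ω (MS R (Set.Ioi b'))

lemma meas_gap_mem (hmeas : ∀ i, Measurable (R i)) (b j : ℕ) (A : Set ℕ) :
    MeasurableSet {ω | gap R b j ω ∈ A} :=
  MS_le hmeas (Set.Ioi 0) _ (ms_gap_mem (Nat.zero_le b) j A)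

lemma measurable_gap (hmeas : ∀ i, Measurable (R i)) (b j : ℕ) :
    Measurable (gap R b j) :=
  measurable_to_countable' fun t => meas_gap_mem hmeas b j {t}

end meas

section prob

variable [MeasurableSpace Ω] {P : Measure Ω} [IsProbabilityMeasure P] {R : ℕ → Ω → ℕ}
variable {α : ℕ → ℝ}

lemma coord_prob (hmeas : ∀ i, Measurable (R i))
    (hident : ∀ i, Measure.map (R i) P = Measure.map (R 0) P) (m : ℕ) (A : Set ℕ) :
    P ((R m) ⁻¹' A) = P ((R 0) ⁻¹' A) := by
  rw [← Measure.map_apply (hmeas m) .of_discrete, hident m,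
    Measure.map_apply (hmeas 0) .of_discrete]

lemma blk_prob (hmeas : ∀ i, Measurable (R i))
    (hindep : iIndepFun R P)
    (hident : ∀ i, Measure.map (R i) P = Measure.map (R 0) P)
    (b t : ℕ) (C : ℕ → Set ℕ) :
    P (⋂ k ∈ Finset.Icc 1 t, (R (b+k)) ⁻¹' (C k))
      = ∏ k ∈ Finset.Icc 1 t, P ((R 0) ⁻¹' (C k)) := by
  have hre : (⋂ k ∈ Finset.Icc 1 t, (R (b+k)) ⁻¹' (C k))
      = ⋂ m ∈ Finset.Icc (b+1) (b+t), (R m) ⁻¹' (C (m - b)) := by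
    ext ω
    simp only [Set.mem_iInter, Finset.mem_Icc, Set.mem_preimage]
    constructor
    · intro h m hm
      have := h (m - b) (by omega)
      rwa [show b + (m - b) = m by omega] at this
    · intro h k hk
      have := h (b + k) (by omega)
      rwa [show b + k - b = k by omega] at this
  rw [hre, hindep.measure_inter_preimage_eq_mul (Finset.Icc (b+1) (b+t))
    (sets := fun m => C (m - b)) (fun m _ => .of_discrete)]
  refine Finset.prod_nbij' (fun m => m - b) (fun k => b + k) ?_ ?_ ?_ ?_ ?_
  · intro m hm; simp only [Finset.mem_Icc] at *; omega
  · intro k hk; simp only [Finset.mem_Icc] at *; omega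
  · intro m hm; simp only [Finset.mem_Icc] at hm; show b + (m - b) = m; omega
  · intro k hk; simp only [Finset.mem_Icc] at hk; show b + k - b = k; omega
  · intro m hm
    rw [coord_prob hmeas hident m, coord_prob hmeas hident 0]

lemma prob_nxt_stationary (hmeas : ∀ i, Measurable (R i))
    (hindep : iIndepFun R P)
    (hident : ∀ i, Measure.map (R i) P = Measure.map (R 0) P)
    (b : ℕ) {t : ℕ} (ht : 1 ≤ t) :
    P {ω | nxt R b ω = t} = P {ω | nxt R 0 ω = t} := by
  rw [nxt_eq_set b t ht, nxt_eq_set 0 t ht,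
    blk_prob hmeas hindep hident b t _, blk_prob hmeas hindep hident 0 t _]

lemma prob_Iio (hα : ∀ k, P {ω | R 0 ω ≤ k} = ENNReal.ofReal (α k)) {k : ℕ} (hk : 1 ≤ k) :
    P ((R 0) ⁻¹' (Set.Iio k)) = ENNReal.ofReal (α (k-1)) := by
  have : (R 0) ⁻¹' (Set.Iio k) = {ω | R 0 ω ≤ k - 1} := by
    ext ω; simp only [Set.mem_preimage, Set.mem_Iio, Set.mem_setOf_eq]; omega
  rw [this, hα]

lemma prob_block (hmeas : ∀ i, Measurable (R i))
    (hindep : iIndepFun R P)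
    (hident : ∀ i, Measure.map (R i) P = Measure.map (R 0) P)
    (hα : ∀ k, P {ω | R 0 ω ≤ k} = ENNReal.ofReal (α k))
    (h01 : ∀ k, 0 ≤ α k ∧ α k ≤ 1)
    (b K : ℕ) :
    P (⋂ k ∈ Finset.Icc 1 K, (R (b+k)) ⁻¹' (Set.Iio k))
      = ENNReal.ofReal (∏ i ∈ Finset.range K, α i) := by
  rw [blk_prob hmeas hindep hident b K _]
  have h1 : ∀ k ∈ Finset.Icc 1 K, P ((R 0) ⁻¹' (Set.Iio k)) = ENNReal.ofReal (α (k-1)) := by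
    intro k hk
    have := Finset.mem_Icc.1 hk
    exact prob_Iio hα this.1
  rw [Finset.prod_congr rfl h1]
  have h2 : ∏ k ∈ Finset.Icc 1 K, ENNReal.ofReal (α (k-1))
      = ∏ i ∈ Finset.range K, ENNReal.ofReal (α i) := by
    refine Finset.prod_nbij' (fun k => k - 1) (fun i => i + 1) ?_ ?_ ?_ ?_ ?_
    · intro k hk; simp only [Finset.mem_Icc, Finset.mem_range] at *; omega
    · intro i hi; simp only [Finset.mem_Icc, Finset.mem_range] at *; omega
    · intro k hk; simp only [Finset.mem_Icc] at hk; show k - 1 + 1 = k; omega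
    · intro i _; show i + 1 - 1 = i; omega
    · intro k _; rfl
  rw [h2, ← ENNReal.ofReal_prod_of_nonneg (fun i _ => (h01 i).1)]

lemma prob_nxt_zero (hmeas : ∀ i, Measurable (R i))
    (hindep : iIndepFun R P)
    (hident : ∀ i, Measure.map (R i) P = Measure.map (R 0) P)
    (hα : ∀ k, P {ω | R 0 ω ≤ k} = ENNReal.ofReal (α k))
    (h01 : ∀ k, 0 ≤ α k ∧ α k ≤ 1)
    (hprod0 : Tendsto (fun n => ∏ i ∈ Finset.range n, α i) atTop (nhds 0))
    (b : ℕ) : P {ω | nxt R b ω = 0} = 0 := by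
  have hsub : ∀ K : ℕ, {ω | nxt R b ω = 0} ⊆ ⋂ k ∈ Finset.Icc 1 K, (R (b+k)) ⁻¹' (Set.Iio k) := by
    intro K
    rw [nxt_eq_zero_set]
    intro ω hω
    simp only [Set.mem_iInter, Set.mem_preimage] at *
    intro k hk
    have := Finset.mem_Icc.1 hk
    exact hω k this.1
  have hle : ∀ K : ℕ, P {ω | nxt R b ω = 0} ≤ ENNReal.ofReal (∏ i ∈ Finset.range K, α i) := by
    intro K
    rw [← prob_block hmeas hindep hident hα h01 b K]
    exact measure_mono (hsub K)
  have htend : Tendsto (fun K => ENNReal.ofReal (∏ i ∈ Finset.range K, α i)) atTop (nhds 0) := by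
    have := ENNReal.tendsto_ofReal hprod0
    simpa using this
  have := ge_of_tendsto' htend hle
  simpa using this

lemma prob_good (hmeas : ∀ i, Measurable (R i))
    (hindep : iIndepFun R P)
    (hident : ∀ i, Measure.map (R i) P = Measure.map (R 0) P)
    (hα : ∀ k, P {ω | R 0 ω ≤ k} = ENNReal.ofReal (α k))
    (h01 : ∀ k, 0 ≤ α k ∧ α k ≤ 1)
    (hprod0 : Tendsto (fun n => ∏ i ∈ Finset.range n, α i) atTop (nhds 0)) :
    P (good R)ᶜ = 0 := by
  have : (good R)ᶜ = ⋃ b, {ω | nxt R b ω = 0} := by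
    ext ω
    simp only [Set.mem_compl_iff, good, Set.mem_setOf_eq, Set.mem_iUnion, not_forall]
    constructor
    · rintro ⟨b, hb⟩
      push_neg at hb
      refine ⟨b, nxt_eq_zero_iff.2 fun k hk => ?_⟩
      have := hb k
      omega
    · rintro ⟨b, hb⟩
      refine ⟨b, ?_⟩
      push_neg
      intro k
      rcases Nat.eq_zero_or_pos k with h0 | h0
      · intro h; omega
      · intro h1
        have := nxt_eq_zero_iff.1 hb k h0
        omega
  rw [this]
  exact measure_iUnion_null fun b => prob_nxt_zero hmeas hindep hident hα h01 hprod0 b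

lemma prob_gt (hmeas : ∀ i, Measurable (R i))
    (hindep : iIndepFun R P)
    (hident : ∀ i, Measure.map (R i) P = Measure.map (R 0) P)
    (hα : ∀ k, P {ω | R 0 ω ≤ k} = ENNReal.ofReal (α k))
    (h01 : ∀ k, 0 ≤ α k ∧ α k ≤ 1)
    (hprod0 : Tendsto (fun n => ∏ i ∈ Finset.range n, α i) atTop (nhds 0))
    (K : ℕ) :
    ENNReal.ofReal (∏ i ∈ Finset.range K, α i) ≤ P {ω | K < nxt R 0 ω} := by
  rw [← prob_block hmeas hindep hident hα h01 0 K]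
  calc P (⋂ k ∈ Finset.Icc 1 K, (R (0+k)) ⁻¹' (Set.Iio k))
      ≤ P ({ω | nxt R 0 ω = 0} ∪ {ω | K < nxt R 0 ω}) := measure_mono (block_subset 0 K)
    _ ≤ P {ω | nxt R 0 ω = 0} + P {ω | K < nxt R 0 ω} := measure_union_le _ _
    _ = P {ω | K < nxt R 0 ω} := by
        rw [prob_nxt_zero hmeas hindep hident hα h01 hprod0 0, zero_add]

end prob

section key

variable [MeasurableSpace Ω] {P : Measure Ω} [IsProbabilityMeasure P] {R : ℕ → Ω → ℕ}
variable {α : ℕ → ℝ}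

lemma key (hmeas : ∀ i, Measurable (R i))
    (hindep : iIndepFun R P)
    (hident : ∀ i, Measure.map (R i) P = Measure.map (R 0) P)
    (hα : ∀ k, P {ω | R 0 ω ≤ k} = ENNReal.ofReal (α k))
    (h01 : ∀ k, 0 ≤ α k ∧ α k ≤ 1)
    (hprod0 : Tendsto (fun n => ∏ i ∈ Finset.range n, α i) atTop (nhds 0)) :
    ∀ (j b : ℕ) (A : ℕ → Set ℕ),
      P (⋂ i ∈ Finset.range j, {ω | gap R b i ω ∈ A i})
        = ∏ i ∈ Finset.range j, P {ω | nxt R 0 ω ∈ A i} := by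
  have hIndep : iIndep (fun i => MeasurableSpace.comap (R i) inferInstance) P := hindep
  have hmeasNxtEq : ∀ (b t : ℕ), MeasurableSet {ω | nxt R b ω = t} :=
    fun b t => MS_le hmeas (Set.Ioi 0) _ (ms_nxt_eq (Nat.zero_le b) t)
  have hmeasGap : ∀ (b i : ℕ) (A : Set ℕ), MeasurableSet {ω | gap R b i ω ∈ A} :=
    fun b i A => meas_gap_mem hmeas b i A
  intro j
  induction j with
  | zero => intro b A; simp
  | succ j ih =>
    intro b A
    set C := ∏ i ∈ Finset.range j, P {ω | nxt R 0 ω ∈ A (i+1)} with hC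
    set E := ⋂ i ∈ Finset.range (j+1), {ω | gap R b i ω ∈ A i} with hE
    have hEmeas : MeasurableSet E :=
      MeasurableSet.biInter (Finset.range (j+1)).countable_toSet
        (fun i _ => hmeasGap b i (A i))
    have hmemE : ∀ ω, ω ∈ E ↔ ∀ i < j + 1, gap R b i ω ∈ A i := by
      intro ω
      rw [hE]
      simp only [Set.mem_iInter, Finset.mem_range, Set.mem_setOf_eq]
    have hcover : E = ⋃ (t : ↑(A 0)), (E ∩ {ω | nxt R b ω = ↑t}) := by
      ext ω
      simp only [Set.mem_iUnion, Set.mem_inter_iff, Set.mem_setOf_eq]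
      constructor
      · intro hω
        have h0 : gap R b 0 ω ∈ A 0 := (hmemE ω).1 hω 0 (by omega)
        rw [gap_zero] at h0
        exact ⟨⟨nxt R b ω, h0⟩, hω, rfl⟩
      · rintro ⟨t, hω, _⟩; exact hω
    have hdisj : Pairwise (Function.onFun Disjoint
        (fun t : ↑(A 0) => E ∩ {ω | nxt R b ω = ↑t})) := by
      intro t t' htt'
      refine Set.disjoint_left.2 ?_
      rintro ω ⟨_, h1⟩ ⟨_, h2⟩
      simp only [Set.mem_setOf_eq] at h1 h2
      exact htt' (Subtype.ext (h1 ▸ h2 ▸ rfl))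
    have hsum := measure_iUnion (μ := P) hdisj (fun t => hEmeas.inter (hmeasNxtEq b t))
    have hterm : ∀ t : ↑(A 0), P (E ∩ {ω | nxt R b ω = (t : ℕ)})
        = P {ω | nxt R 0 ω = (t : ℕ)} * C := by
      rintro ⟨t, htA⟩
      rcases Nat.eq_zero_or_pos t with h0 | h0
      · subst h0
        have h1 : P (E ∩ {ω | nxt R b ω = 0}) = 0 := by
          refine le_antisymm ?_ zero_le
          calc P (E ∩ {ω | nxt R b ω = 0}) ≤ P {ω | nxt R b ω = 0} :=
                measure_mono Set.inter_subset_right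
            _ = 0 := prob_nxt_zero hmeas hindep hident hα h01 hprod0 b
        have h2 : P {ω | nxt R 0 ω = 0} = 0 :=
          prob_nxt_zero hmeas hindep hident hα h01 hprod0 0
        simp only [Subtype.coe_mk]
        rw [h1, h2, zero_mul]
      · -- t ≥ 1
        have hEeq : E ∩ {ω | nxt R b ω = t}
            = {ω | nxt R b ω = t} ∩ ⋂ i ∈ Finset.range j, {ω | gap R (b+t) i ω ∈ A (i+1)} := by
          ext ω
          simp only [Set.mem_inter_iff, Set.mem_setOf_eq, Set.mem_iInter, Finset.mem_range]
          constructor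
          · rintro ⟨hωE, hnxt⟩
            refine ⟨hnxt, fun i hi => ?_⟩
            have := (hmemE ω).1 hωE (i+1) (by omega)
            rwa [gap_shift, hnxt] at this
          · rintro ⟨hnxt, hrest⟩
            refine ⟨(hmemE ω).2 fun i hi => ?_, hnxt⟩
            rcases Nat.eq_zero_or_pos i with hi0 | hi0
            · subst hi0; rw [gap_zero, hnxt]; exact htA
            · obtain ⟨i', rfl⟩ : ∃ i', i = i' + 1 := ⟨i - 1, by omega⟩
              rw [gap_shift, hnxt]
              exact hrest i' (by omega)
        have hdisjIdx : Disjoint (Set.Ioc b (b+t)) (Set.Ioi (b+t)) := by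
          refine Set.disjoint_left.2 fun x hx hx' => ?_
          simp only [Set.mem_Ioc, Set.mem_Ioi] at hx hx'
          omega
        have hindep2 : Indep (MS R (Set.Ioc b (b+t))) (MS R (Set.Ioi (b+t))) P :=
          indep_iSup_of_disjoint (fun i => (hmeas i).comap_le) hIndep hdisjIdx
        have hm1 : MeasurableSet[MS R (Set.Ioc b (b+t))] {ω | nxt R b ω = t} :=
          ms_nxt_eq_Ioc h0
        have hm2 : MeasurableSet[MS R (Set.Ioi (b+t))]
            (⋂ i ∈ Finset.range j, {ω | gap R (b+t) i ω ∈ A (i+1)}) :=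
          MeasurableSet.biInter (Finset.range j).countable_toSet
            (fun i _ => ms_gap_mem le_rfl i (A (i+1)))
        have hfact := (Indep_iff _ _ P).1 hindep2 _ _ hm1 hm2
        rw [hEeq, hfact, prob_nxt_stationary hmeas hindep hident b h0,
          ih (b+t) (fun i => A (i+1))]
    calc P E = ∑' (t : ↑(A 0)), P (E ∩ {ω | nxt R b ω = ↑t}) := by rw [← hsum, ← hcover]
      _ = ∑' (t : ↑(A 0)), P {ω | nxt R 0 ω = (t : ℕ)} * C := by
          exact tsum_congr hterm
      _ = (∑' (t : ↑(A 0)), P {ω | nxt R 0 ω = (t : ℕ)}) * C := ENNReal.tsum_mul_right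
      _ = P {ω | nxt R 0 ω ∈ A 0} * C := by
          congr 1
          have hcov0 : {ω | nxt R 0 ω ∈ A 0} = ⋃ (t : ↑(A 0)), {ω | nxt R 0 ω = ↑t} := by
            ext ω
            simp only [Set.mem_setOf_eq, Set.mem_iUnion]
            constructor
            · intro h; exact ⟨⟨nxt R 0 ω, h⟩, rfl⟩
            · rintro ⟨⟨t, ht⟩, h⟩; simp only at h; rw [h]; exact ht
          have hd0 : Pairwise (Function.onFun Disjoint
              (fun t : ↑(A 0) => {ω | nxt R 0 ω = (t : ℕ)})) := by
            intro t t' htt'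
            refine Set.disjoint_left.2 ?_
            rintro ω h1 h2
            simp only [Set.mem_setOf_eq] at h1 h2
            exact htt' (Subtype.ext (h1 ▸ h2 ▸ rfl))
          rw [hcov0, measure_iUnion hd0 (fun t => hmeasNxtEq 0 t)]
      _ = ∏ i ∈ Finset.range (j+1), P {ω | nxt R 0 ω ∈ A i} := by
          rw [Finset.prod_range_succ']
          rw [hC, mul_comm]

end key

section derived

variable [MeasurableSpace Ω] {P : Measure Ω} [IsProbabilityMeasure P] {R : ℕ → Ω → ℕ}
variable {α : ℕ → ℝ}

lemma gap_dist (hmeas : ∀ i, Measurable (R i))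
    (hindep : iIndepFun R P)
    (hident : ∀ i, Measure.map (R i) P = Measure.map (R 0) P)
    (hα : ∀ k, P {ω | R 0 ω ≤ k} = ENNReal.ofReal (α k))
    (h01 : ∀ k, 0 ≤ α k ∧ α k ≤ 1)
    (hprod0 : Tendsto (fun n => ∏ i ∈ Finset.range n, α i) atTop (nhds 0))
    (j : ℕ) (B : Set ℕ) :
    P {ω | gap R 0 j ω ∈ B} = P {ω | nxt R 0 ω ∈ B} := by
  have h := key hmeas hindep hident hα h01 hprod0 (j+1) 0 (fun i => if i = j then B else Set.univ)
  have hL : (⋂ i ∈ Finset.range (j+1), {ω | gap R 0 i ω ∈ (if i = j then B else Set.univ)})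
      = {ω | gap R 0 j ω ∈ B} := by
    ext ω
    simp only [Set.mem_iInter, Finset.mem_range, Set.mem_setOf_eq]
    constructor
    · intro h'
      have := h' j (by omega)
      simpa using this
    · intro h' i hi
      by_cases hij : i = j
      · subst hij; simpa using h'
      · simp [hij]
  have hR : ∀ i : ℕ, P {ω | nxt R 0 ω ∈ (if i = j then B else Set.univ)}
      = if i = j then P {ω | nxt R 0 ω ∈ B} else 1 := by
    intro i
    by_cases hij : i = j <;> simp [hij]
  rw [hL] at h
  rw [h, Finset.prod_congr rfl (fun i _ => hR i), Finset.prod_ite_eq' (Finset.range (j+1)) j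
    (fun _ => P {ω | nxt R 0 ω ∈ B})]
  simp

lemma gap_indepFun (hmeas : ∀ i, Measurable (R i))
    (hindep : iIndepFun R P)
    (hident : ∀ i, Measure.map (R i) P = Measure.map (R 0) P)
    (hα : ∀ k, P {ω | R 0 ω ≤ k} = ENNReal.ofReal (α k))
    (h01 : ∀ k, 0 ≤ α k ∧ α k ≤ 1)
    (hprod0 : Tendsto (fun n => ∏ i ∈ Finset.range n, α i) atTop (nhds 0))
    {i j : ℕ} (hij : i < j) :
    IndepFun (gap R 0 i) (gap R 0 j) P := by
  rw [indepFun_iff_measure_inter_preimage_eq_mul]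
  intro A B _ _
  set F : ℕ → Set ℕ := fun k => if k = i then A else if k = j then B else Set.univ with hF
  have h := key hmeas hindep hident hα h01 hprod0 (j+1) 0 F
  have hL : (⋂ k ∈ Finset.range (j+1), {ω | gap R 0 k ω ∈ F k})
      = gap R 0 i ⁻¹' A ∩ gap R 0 j ⁻¹' B := by
    ext ω
    simp only [Set.mem_iInter, Finset.mem_range, Set.mem_setOf_eq, Set.mem_inter_iff,
      Set.mem_preimage]
    constructor
    · intro h'
      have h1 := h' i (by omega)
      have h2 := h' j (by omega)
      rw [hF] at h1 h2
      simp only [if_pos rfl] at h1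
      simp only [show ¬ (j = i) by omega, if_false, if_pos rfl] at h2
      exact ⟨by simpa using h1, h2⟩
    · rintro ⟨h1, h2⟩ k hk
      rw [hF]
      by_cases hki : k = i
      · subst hki; simpa using h1
      · by_cases hkj : k = j
        · subst hkj; simpa [hki] using h2
        · simp [hki, hkj]
  have hR : ∀ k : ℕ, P {ω | nxt R 0 ω ∈ F k}
      = if k = i then P {ω | nxt R 0 ω ∈ A} else
          (if k = j then P {ω | nxt R 0 ω ∈ B} else 1) := by
    intro k
    rw [hF]
    by_cases hki : k = i
    · simp [hki]
    · by_cases hkj : k = j <;> simp [hki, hkj, show ¬ (j = i) by omega]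
  rw [hL] at h
  rw [h, Finset.prod_congr rfl (fun k _ => hR k)]
  set a := P {ω | nxt R 0 ω ∈ A} with ha
  set b := P {ω | nxt R 0 ω ∈ B} with hb
  set f : ℕ → ℝ≥0∞ := fun k => if k = i then a else (if k = j then b else 1) with hf
  have hprod : ∏ k ∈ Finset.range (j+1), f k = a * b := by
    have hi : i ∈ Finset.range (j+1) := by simp; omega
    rw [← Finset.mul_prod_erase _ f hi]
    have hj : j ∈ (Finset.range (j+1)).erase i := by
      rw [Finset.mem_erase]
      exact ⟨by omega, by simp⟩
    rw [← Finset.mul_prod_erase _ f hj]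
    have h1 : f i = a := by simp [hf]
    have h2 : f j = b := by simp [hf, show j ≠ i by omega]
    have h3 : ∏ x ∈ ((Finset.range (j+1)).erase i).erase j, f x = 1 := by
      refine Finset.prod_eq_one fun x hx => ?_
      rw [Finset.mem_erase, Finset.mem_erase] at hx
      simp [hf, hx.1, hx.2.1]
    rw [h1, h2, h3, mul_one]
  rw [hprod]
  have hgi : gap R 0 i ⁻¹' A = {ω | gap R 0 i ω ∈ A} := rfl
  have hgj : gap R 0 j ⁻¹' B = {ω | gap R 0 j ω ∈ B} := rfl
  rw [hgi, hgj, gap_dist hmeas hindep hident hα h01 hprod0 i A,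
    gap_dist hmeas hindep hident hα h01 hprod0 j B]

end derived

section slln

variable [MeasurableSpace Ω] {P : Measure Ω} [IsProbabilityMeasure P] {R : ℕ → Ω → ℕ}
variable {α : ℕ → ℝ}

lemma integral_trunc_ge (hmeas : ∀ i, Measurable (R i))
    (hindep : iIndepFun R P)
    (hident : ∀ i, Measure.map (R i) P = Measure.map (R 0) P)
    (hα : ∀ k, P {ω | R 0 ω ≤ k} = ENNReal.ofReal (α k))
    (h01 : ∀ k, 0 ≤ α k ∧ α k ≤ 1)
    (hprod0 : Tendsto (fun n => ∏ i ∈ Finset.range n, α i) atTop (nhds 0))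
    (c : ℕ) :
    (∑ k ∈ Finset.range c, ∏ i ∈ Finset.range k, α i)
      ≤ ∫ ω, ((min (gap R 0 0 ω) c : ℕ) : ℝ) ∂P := by
  have hSk : ∀ k : ℕ, MeasurableSet {ω | k < gap R 0 0 ω} := by
    intro k
    have : {ω : Ω | k < gap R 0 0 ω} = {ω | gap R 0 0 ω ∈ Set.Ioi k} := rfl
    rw [this]; exact meas_gap_mem hmeas 0 0 _
  have hfun : ∀ ω : Ω, ((min (gap R 0 0 ω) c : ℕ) : ℝ)
      = ∑ k ∈ Finset.range c, if k < gap R 0 0 ω then (1:ℝ) else 0 := by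
    intro ω
    rw [Finset.sum_boole]
    have : (Finset.range c).filter (fun k => k < gap R 0 0 ω)
        = Finset.range (min (gap R 0 0 ω) c) := by
      ext a
      simp only [Finset.mem_filter, Finset.mem_range, Nat.lt_min]
      omega
    rw [this, Finset.card_range]
  have hind : ∀ k : ℕ, (fun ω => if k < gap R 0 0 ω then (1:ℝ) else 0)
      = Set.indicator {ω | k < gap R 0 0 ω} (fun _ => (1:ℝ)) := by
    intro k
    ext ω
    by_cases h : k < gap R 0 0 ω <;> simp [Set.indicator_apply, Set.mem_setOf_eq, h]
  have hint : ∀ k ∈ Finset.range c,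
      Integrable (fun ω => if k < gap R 0 0 ω then (1:ℝ) else 0) P := by
    intro k _
    rw [hind k]
    exact (integrable_const (1:ℝ)).indicator (hSk k)
  have hlast : ∫ ω, ((min (gap R 0 0 ω) c : ℕ) : ℝ) ∂P
      = ∑ k ∈ Finset.range c, (P {ω | k < gap R 0 0 ω}).toReal := by
    rw [integral_congr_ae (ae_of_all _ hfun), integral_finset_sum _ hint]
    refine Finset.sum_congr rfl fun k _ => ?_
    rw [hind k, integral_indicator_const (1:ℝ) (hSk k), smul_eq_mul, mul_one]; rfl
  rw [hlast]
  refine Finset.sum_le_sum fun k _ => ?_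
  have hset : {ω : Ω | k < gap R 0 0 ω} = {ω | k < nxt R 0 ω} := rfl
  have h1 : ENNReal.ofReal (∏ i ∈ Finset.range k, α i) ≤ P {ω | k < gap R 0 0 ω} := by
    rw [hset]
    exact prob_gt hmeas hindep hident hα h01 hprod0 k
  calc (∏ i ∈ Finset.range k, α i)
      = (ENNReal.ofReal (∏ i ∈ Finset.range k, α i)).toReal := by
        rw [ENNReal.toReal_ofReal (Finset.prod_nonneg fun i _ => (h01 i).1)]
    _ ≤ (P {ω | k < gap R 0 0 ω}).toReal := ENNReal.toReal_mono (measure_ne_top P _) h1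

lemma tendsto_pos_div (hmeas : ∀ i, Measurable (R i))
    (hindep : iIndepFun R P)
    (hident : ∀ i, Measure.map (R i) P = Measure.map (R 0) P)
    (hα : ∀ k, P {ω | R 0 ω ≤ k} = ENNReal.ofReal (α k))
    (h01 : ∀ k, 0 ≤ α k ∧ α k ≤ 1)
    (hprod0 : Tendsto (fun n => ∏ i ∈ Finset.range n, α i) atTop (nhds 0))
    (hμinf : ¬ Summable fun j : ℕ => ∏ i ∈ Finset.range (j + 1), α i) :
    ∀ᵐ ω ∂P, Tendsto (fun j : ℕ => (pos R 0 j ω : ℝ) / j) atTop atTop := by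
  have hπpos : ∀ k : ℕ, 0 ≤ ∏ i ∈ Finset.range k, α i :=
    fun k => Finset.prod_nonneg fun i _ => (h01 i).1
  have hPi : Tendsto (fun c : ℕ => ∑ k ∈ Finset.range c, ∏ i ∈ Finset.range k, α i) atTop atTop := by
    refine (not_summable_iff_tendsto_nat_atTop_of_nonneg hπpos).1 ?_
    intro hs
    exact hμinf ((summable_nat_add_iff 1).2 hs)
  set X : ℕ → ℕ → Ω → ℝ := fun c j ω => ((min (gap R 0 j ω) c : ℕ) : ℝ) with hX
  have hφ : ∀ c : ℕ, Measurable (fun t : ℕ => ((min t c : ℕ) : ℝ)) := fun c => measurable_from_nat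
  have hXmeas : ∀ c j, Measurable (X c j) := fun c j => (hφ c).comp (measurable_gap hmeas 0 j)
  have hXindep : ∀ c, Pairwise (Function.onFun (IndepFun · · P) (X c)) := by
    intro c i j hij
    rcases lt_or_gt_of_ne hij with h | h
    · exact (gap_indepFun hmeas hindep hident hα h01 hprod0 h).comp (hφ c) (hφ c)
    · exact ((gap_indepFun hmeas hindep hident hα h01 hprod0 h).comp (hφ c) (hφ c)).symm
  have hgapident : ∀ j, IdentDistrib (gap R 0 j) (gap R 0 0) P P := by
    intro j
    refine ⟨(measurable_gap hmeas 0 j).aemeasurable, (measurable_gap hmeas 0 0).aemeasurable, ?_⟩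
    refine Measure.ext fun B hB => ?_
    rw [Measure.map_apply (measurable_gap hmeas 0 j) hB,
      Measure.map_apply (measurable_gap hmeas 0 0) hB]
    show P {ω | gap R 0 j ω ∈ B} = P {ω | gap R 0 0 ω ∈ B}
    rw [gap_dist hmeas hindep hident hα h01 hprod0 j B,
      gap_dist hmeas hindep hident hα h01 hprod0 0 B]
  have hXident : ∀ c j, IdentDistrib (X c j) (X c 0) P P :=
    fun c j => (hgapident j).comp (hφ c)
  have hXint : ∀ c, Integrable (X c 0) P := by
    intro c
    refine (integrable_const (c:ℝ)).mono' ((hXmeas c 0).aestronglyMeasurable)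
      (ae_of_all _ fun ω => ?_)
    rw [Real.norm_eq_abs, abs_of_nonneg (by positivity)]
    show ((min (gap R 0 0 ω) c : ℕ) : ℝ) ≤ (c : ℝ)
    exact_mod_cast min_le_right _ _
  have hslln : ∀ᵐ ω ∂P, ∀ c : ℕ,
      Tendsto (fun n : ℕ => (n:ℝ)⁻¹ • ∑ i ∈ Finset.range n, X c i ω) atTop (nhds (P[X c 0])) :=
    ae_all_iff.2 fun c => strong_law_ae _ (hXint c) (hXindep c) (hXident c)
  filter_upwards [hslln] with ω hω
  rw [tendsto_atTop]
  intro C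
  obtain ⟨c, hc⟩ := (tendsto_atTop.1 hPi (C+1)).exists
  have hEc : C + 1 ≤ P[X c 0] :=
    le_trans hc (integral_trunc_ge hmeas hindep hident hα h01 hprod0 c)
  have hev : ∀ᶠ n : ℕ in atTop, C ≤ (n:ℝ)⁻¹ • ∑ i ∈ Finset.range n, X c i ω :=
    (hω c).eventually (eventually_ge_nhds (by linarith))
  filter_upwards [hev] with n hn
  have hsum : ∑ i ∈ Finset.range n, X c i ω ≤ (pos R 0 n ω : ℝ) := by
    have h1 : (pos R 0 n ω : ℝ) = ∑ i ∈ Finset.range n, (gap R 0 i ω : ℝ) := by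
      rw [pos_eq_sum 0 n ω]; push_cast; simp
    rw [h1]
    refine Finset.sum_le_sum fun i _ => ?_
    show ((min (gap R 0 i ω) c : ℕ) : ℝ) ≤ (gap R 0 i ω : ℝ)
    exact_mod_cast min_le_left _ _
  calc C ≤ (n:ℝ)⁻¹ • ∑ i ∈ Finset.range n, X c i ω := hn
    _ ≤ (n:ℝ)⁻¹ • (pos R 0 n ω : ℝ) := by
        rw [smul_eq_mul, smul_eq_mul]
        exact mul_le_mul_of_nonneg_left hsum (by positivity)
    _ = (pos R 0 n ω : ℝ) / n := by rw [smul_eq_mul, inv_mul_eq_div]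

end slln

section pathwise

variable {R : ℕ → Ω → ℕ} {ω : Ω}

lemma pathwise {ζ : ℕ → Ω → Bool} (hζ0 : ∀ ω, ζ 0 ω = true)
    (hζ : ∀ n : ℕ, 0 < n → ∀ ω, (ζ n ω = true ↔ ∃ m < n, ζ m ω = true ∧ n - m ≤ R n ω))
    (hg : ω ∈ good R)
    (hT : Tendsto (fun j : ℕ => (pos R 0 j ω : ℝ) / j) atTop atTop) :
    Tendsto (fun n : ℕ => (∑ i ∈ Finset.Icc 1 n, (if ζ i ω = true then (1:ℝ) else 0)) / n)
      atTop (nhds 0) := by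
  have hcard : ∀ n : ℕ, (∑ i ∈ Finset.Icc 1 n, (if ζ i ω = true then (1:ℝ) else 0))
      = (((Finset.Icc 1 n).filter (fun i => ζ i ω = true)).card : ℝ) := by
    intro n; rw [Finset.sum_boole]
  have hJne : ∀ n : ℕ, {j | n < pos R 0 j ω}.Nonempty := by
    intro n
    refine ⟨n+1, ?_⟩
    simp only [Set.mem_setOf_eq]
    have := self_le_pos hg 0 (n+1)
    omega
  set J : ℕ → ℕ := fun n => sInf {j | n < pos R 0 j ω} with hJ
  have hJmem : ∀ n, n < pos R 0 (J n) ω := fun n => Nat.sInf_mem (hJne n)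
  have hcardle : ∀ n : ℕ, ((Finset.Icc 1 n).filter (fun i => ζ i ω = true)).card ≤ J n := by
    intro n
    have hmain : ∀ i ∈ (Finset.Icc 1 n).filter (fun i => ζ i ω = true),
        pos R 0 (sInf {j | pos R 0 j ω = i}) ω = i := by
      intro i hi
      rw [Finset.mem_filter] at hi
      obtain ⟨j0, hj0⟩ := informed_eq_pos hζ0 hζ hg i hi.2
      refine Nat.sInf_mem (⟨j0, ?_⟩ : {j | pos R 0 j ω = i}.Nonempty)
      simp only [Set.mem_setOf_eq]
      exact hj0
    have h1 := Finset.card_le_card_of_injOn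
      (s := (Finset.Icc 1 n).filter (fun i => ζ i ω = true)) (t := Finset.range (J n))
      (fun i => sInf {j | pos R 0 j ω = i}) ?_ ?_
    · simpa using h1
    · intro i hi
      rw [Finset.mem_coe, Finset.mem_range]
      by_contra hc
      push_neg at hc
      have h1 : pos R 0 (J n) ω ≤ pos R 0 (sInf {j | pos R 0 j ω = i}) ω :=
        (pos_strictMono hg).le_iff_le.2 hc
      have h2 := hmain i hi
      have h3 := hJmem n
      rw [Finset.mem_coe, Finset.mem_filter, Finset.mem_Icc] at hi
      omega
    · intro i hi i' hi' hEq
      have e1 := hmain i (Finset.mem_coe.1 hi)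
      have e2 := hmain i' (Finset.mem_coe.1 hi')
      simp only at hEq
      rw [← e1, ← e2, hEq]
  rw [Metric.tendsto_atTop]
  intro ε hε
  obtain ⟨J₀, hJ₀⟩ := eventually_atTop.1 (tendsto_atTop.1 hT (2/ε))
  obtain ⟨M, hM⟩ := exists_nat_gt (2/ε)
  refine ⟨max (pos R 0 J₀ ω + 1) (M+1), fun n hn => ?_⟩
  have hn1 : pos R 0 J₀ ω + 1 ≤ n := le_trans (le_max_left _ _) hn
  have hn2 : M + 1 ≤ n := le_trans (le_max_right _ _) hn
  have hnpos : (0:ℝ) < n := by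
    have : 1 ≤ n := by omega
    exact_mod_cast Nat.lt_of_lt_of_le Nat.zero_lt_one this
  have hJgt : J₀ < J n := by
    by_contra hc
    push_neg at hc
    have h1 : pos R 0 (J n) ω ≤ pos R 0 J₀ ω := (pos_strictMono hg).le_iff_le.2 hc
    have h2 := hJmem n
    omega
  set j := J n - 1 with hjdef
  have hjn : pos R 0 j ω ≤ n := by
    have h1 : j ∉ {j | n < pos R 0 j ω} := Nat.notMem_of_lt_sInf (show j < J n by omega)
    simp only [Set.mem_setOf_eq, not_lt] at h1
    exact h1
  have hjC : 2/ε ≤ (pos R 0 j ω : ℝ) / j := hJ₀ j (by omega)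
  have hj1 : 1 ≤ j := by
    by_contra hc
    push_neg at hc
    have hj0 : j = 0 := by omega
    rw [hj0] at hjC
    have : pos R 0 0 ω = 0 := rfl
    rw [this] at hjC
    simp at hjC
    have : 0 < 2/ε := by positivity
    linarith
  have hjpos : (0:ℝ) < j := by exact_mod_cast hj1
  have hjle : (j:ℝ) ≤ (ε/2) * n := by
    have hpn : (pos R 0 j ω : ℝ) ≤ n := Nat.cast_le.2 hjn
    have h1 : (2/ε) * j ≤ (pos R 0 j ω : ℝ) := (le_div_iff₀ hjpos).1 hjC
    have h2 : (2/ε) * j ≤ (n:ℝ) := le_trans h1 hpn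
    have hεpos : (0:ℝ) < ε := hε
    have h3 := mul_le_mul_of_nonneg_left h2 (le_of_lt (half_pos hεpos))
    calc (j:ℝ) = (ε/2) * ((2/ε) * j) := by field_simp
      _ ≤ (ε/2) * n := h3
  have hJle : (J n : ℝ) ≤ (ε/2) * n + 1 := by
    have : J n = j + 1 := by omega
    rw [this]
    push_cast
    linarith
  have hrecip : 1/(n:ℝ) < ε/2 := by
    rw [div_lt_div_iff₀ hnpos two_pos]
    have hn3 : (2/ε) < (n:ℝ) := by
      have : ((M:ℝ)+1) ≤ n := by exact_mod_cast hn2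
      linarith
    have hεpos : (0:ℝ) < ε := hε
    have := mul_lt_mul_of_pos_left hn3 hεpos
    rw [mul_div_cancel₀] at this
    · linarith
    · linarith
  rw [Real.dist_eq, sub_zero, hcard n]
  have hnn : (0:ℝ) ≤ (((Finset.Icc 1 n).filter (fun i => ζ i ω = true)).card : ℝ) / n := by
    positivity
  rw [abs_of_nonneg hnn]
  have hb1 : (((Finset.Icc 1 n).filter (fun i => ζ i ω = true)).card : ℝ) ≤ (J n : ℝ) := by
    exact_mod_cast hcardle n
  calc (((Finset.Icc 1 n).filter (fun i => ζ i ω = true)).card : ℝ) / n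
      ≤ (J n : ℝ) / n := (div_le_div_iff_of_pos_right hnpos).2 hb1
    _ ≤ ((ε/2) * n + 1) / n := (div_le_div_iff_of_pos_right hnpos).2 hJle
    _ = ε/2 + 1/n := by field_simp
    _ < ε/2 + ε/2 := by linarith
    _ = ε := by ring

end pathwise

end RF

/-- if `∏_{k≥0} α_k = 0` and `μ = 1 + ∑_{j≥1} ∏_{i=0}^{j-1} α_i = ∞`, then in
the Reverse Firework process the rumor survives almost surely (infinitely many individuals
are informed), but the asymptotic proportion of informed individuals is zero:
`N(n)/n → 0` almost surely. -/
theorem rumor_stmt_19 {Ω : Type*} [MeasurableSpace Ω] (P : Measure Ω) [IsProbabilityMeasure P]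
    (R : ℕ → Ω → ℕ) (hmeas : ∀ i, Measurable (R i))
    (hindep : iIndepFun R P)
    (hident : ∀ i, Measure.map (R i) P = Measure.map (R 0) P)
    (α : ℕ → ℝ) (hα : ∀ k, P {ω | R 0 ω ≤ k} = ENNReal.ofReal (α k))
    (hmono : Monotone α) (h01 : ∀ k, 0 ≤ α k ∧ α k ≤ 1) (hα0 : 0 < α 0 ∧ α 0 < 1)
    (hprod0 : Tendsto (fun n => ∏ i ∈ Finset.range n, α i) atTop (nhds 0))
    (hμinf : ¬ Summable fun j : ℕ => ∏ i ∈ Finset.range (j + 1), α i)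
    (ζ : ℕ → Ω → Bool)
    (hζ0 : ∀ ω, ζ 0 ω = true)
    (hζ : ∀ n : ℕ, 0 < n → ∀ ω,
      (ζ n ω = true ↔ ∃ m < n, ζ m ω = true ∧ n - m ≤ R n ω)) :
    P {ω | {n : ℕ | ζ n ω = true}.Infinite} = 1 ∧
      ∀ᵐ ω ∂P, Tendsto
        (fun n : ℕ => (∑ i ∈ Finset.Icc 1 n, (if ζ i ω = true then (1 : ℝ) else 0)) / n)
        atTop (nhds 0) := by
  have hgc : P (RF.good R)ᶜ = 0 := RF.prob_good hmeas hindep hident hα h01 hprod0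
  constructor
  · have hsub : RF.good R ⊆ {ω | {n : ℕ | ζ n ω = true}.Infinite} :=
      fun ω hω => RF.informed_infinite hζ0 hζ hω
    have h1 : (1:ℝ≥0∞) ≤ P (RF.good R) := by
      have h2 := measure_union_le (μ := P) (RF.good R) (RF.good R)ᶜ
      rw [Set.union_compl_self, measure_univ, hgc, add_zero] at h2
      exact h2
    exact le_antisymm prob_le_one (le_trans h1 (measure_mono hsub))
  · have hae1 : ∀ᵐ ω ∂P, ω ∈ RF.good R := by
      rw [ae_iff]
      exact hgc
    have hae2 := RF.tendsto_pos_div hmeas hindep hident hα h01 hprod0 hμinf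
    filter_upwards [hae1, hae2] with ω h1 h2
    exact RF.pathwise hζ0 hζ h1 h2
end
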